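/- arXiv:2409.18619 — 3 statements merged into one kernel-verified Lean document; each statement's English description precedes it below -/
import Mathlib

section
/- Every biframe homomorphism f : L → M factors as f = e ∘ f̄ where f̄ : L → (f(L), f[L₁], f[L₂]) is an extremal epimorphism of biframes and e : (f(L), f[L₁], f[L₂]) → M is a monomorphism, where f(L) is the pushout in Frm of f₁ ⊕ f₂ : L₁ ⊕ L₂ → f[L₁] ⊕ f[L₂] along the quotient map q_L : L₁ ⊕ L₂ → L₀. -/
/-! Basic category-style notions for frames and biframes. -/

/-- `(K, i1, i2)` is a coproduct of the frames `L1` and `L2` in the category of frames. -/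
def IsCoprod {L1 L2 K : Type} [Order.Frame L1] [Order.Frame L2] [Order.Frame K]
    (i1 : FrameHom L1 K) (i2 : FrameHom L2 K) : Prop :=
  ∀ (Q : Type) [Order.Frame Q], ∀ (h1 : FrameHom L1 Q) (h2 : FrameHom L2 Q),
    ∃! k : FrameHom K Q, k.comp i1 = h1 ∧ k.comp i2 = h2

/-- `f' : C → P` (the pushout of `f` along `g`) and `g' : B → P` form a pushout square over
`f : A → B` and `g : A → C` in the category of frames. -/
def IsPushoutSquare {A B C P : Type} [Order.Frame A] [Order.Frame B] [Order.Frame C]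
    [Order.Frame P] (f : FrameHom A B) (g : FrameHom A C)
    (f' : FrameHom C P) (g' : FrameHom B P) : Prop :=
  g'.comp f = f'.comp g ∧
    ∀ (Q : Type) [Order.Frame Q], ∀ (u : FrameHom B Q) (v : FrameHom C Q),
      u.comp f = v.comp g → ∃! k : FrameHom P Q, k.comp g' = u ∧ k.comp f' = v

/-- A biframe `(L₀, L₁, L₂)`: an ambient frame `L₀` together with two component frames
`L₁, L₂` embedded in it by frame homomorphisms `e1, e2` (so the images are subframes),
such that the union of the images is a subbasis of `L₀`: every element of `L₀` is a join
of finite meets `e1 a ⊓ e2 b` of elements coming from the two components. -/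
structure Biframe where
  L0 : Type
  L1 : Type
  L2 : Type
  [fr0 : Order.Frame L0]
  [fr1 : Order.Frame L1]
  [fr2 : Order.Frame L2]
  e1 : FrameHom L1 L0
  e2 : FrameHom L2 L0
  inj1 : Function.Injective e1
  inj2 : Function.Injective e2
  gen : ∀ x : L0, ∃ A : Set (L1 × L2), x = sSup ((fun p => e1 p.1 ⊓ e2 p.2) '' A)

attribute [instance] Biframe.fr0 Biframe.fr1 Biframe.fr2

/-- A biframe homomorphism: a frame homomorphism of the ambient frames restricting to frame
homomorphisms of the component frames. -/
@[ext]
structure BiframeHom (L M : Biframe) where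
  h0 : FrameHom L.L0 M.L0
  h1 : FrameHom L.L1 M.L1
  h2 : FrameHom L.L2 M.L2
  comm1 : h0.comp L.e1 = M.e1.comp h1
  comm2 : h0.comp L.e2 = M.e2.comp h2

/-- Composition of biframe homomorphisms. -/
def BiframeHom.comp {L M N : Biframe} (g : BiframeHom M N) (f : BiframeHom L M) :
    BiframeHom L N where
  h0 := g.h0.comp f.h0
  h1 := g.h1.comp f.h1
  h2 := g.h2.comp f.h2
  comm1 := by rw [FrameHom.comp_assoc, f.comm1, ← FrameHom.comp_assoc, g.comm1,
    FrameHom.comp_assoc]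
  comm2 := by rw [FrameHom.comp_assoc, f.comm2, ← FrameHom.comp_assoc, g.comm2,
    FrameHom.comp_assoc]

/-- The identity biframe homomorphism. -/
def BiframeHom.id (L : Biframe) : BiframeHom L L where
  h0 := FrameHom.id _
  h1 := FrameHom.id _
  h2 := FrameHom.id _
  comm1 := by rw [FrameHom.id_comp, FrameHom.comp_id]
  comm2 := by rw [FrameHom.id_comp, FrameHom.comp_id]

/-- Monomorphisms in the category `BiFrm`. -/
def BiframeHom.IsMono {L M : Biframe} (m : BiframeHom L M) : Prop :=
  ∀ (N : Biframe) (g h : BiframeHom N L), m.comp g = m.comp h → g = h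

/-- Epimorphisms in the category `BiFrm`. -/
def BiframeHom.IsEpi {L M : Biframe} (f : BiframeHom L M) : Prop :=
  ∀ (N : Biframe) (g h : BiframeHom M N), g.comp f = h.comp f → g = h

/-- Isomorphisms in the category `BiFrm`. -/
def BiframeHom.IsIso {L M : Biframe} (f : BiframeHom L M) : Prop :=
  ∃ g : BiframeHom M L, g.comp f = BiframeHom.id L ∧ f.comp g = BiframeHom.id M

/-- Extremal epimorphisms in the category `BiFrm`: epimorphisms `f` such that whenever
`f = m ∘ h` with `m` a monomorphism, `m` is an isomorphism. -/
def BiframeHom.IsExtremalEpi {L M : Biframe} (f : BiframeHom L M) : Prop :=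
  f.IsEpi ∧ ∀ (N : Biframe) (h : BiframeHom L N) (m : BiframeHom N M),
    m.IsMono → f = m.comp h → m.IsIso

/-- The underlying frame homomorphism `f₀` of the biframe homomorphism `f` is the pushout of
`f₁ ⊕ f₂` along `q_L` in `Frm`: for any presentation of the coproducts `L₁ ⊕ L₂` and
`M₁ ⊕ M₂` with the canonical quotient maps `q_L`, `q_M`, and the induced map
`F = f₁ ⊕ f₂` between them, the square `(F, q_L, f₀, q_M)` is a pushout square. -/
def BiframeHom.IsCanonicalPushout {L M : Biframe} (f : BiframeHom L M) : Prop :=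
  ∀ (K : Type) [Order.Frame K], ∀ (i1 : FrameHom L.L1 K) (i2 : FrameHom L.L2 K),
    IsCoprod i1 i2 →
    ∀ qL : FrameHom K L.L0, qL.comp i1 = L.e1 → qL.comp i2 = L.e2 →
    ∀ (K' : Type) [Order.Frame K'], ∀ (j1 : FrameHom M.L1 K') (j2 : FrameHom M.L2 K'),
      IsCoprod j1 j2 →
      ∀ qM : FrameHom K' M.L0, qM.comp j1 = M.e1 → qM.comp j2 = M.e2 →
      ∀ F : FrameHom K K', F.comp i1 = j1.comp f.h1 → F.comp i2 = j2.comp f.h2 →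
        IsPushoutSquare F qL f.h0 qM


namespace BFF

variable {A : Type} [Order.Frame A]

structure IsNuc (j : A → A) : Prop where
  le_apply : ∀ x, x ≤ j x
  map_inf : ∀ x y, j (x ⊓ y) = j x ⊓ j y
  idem : ∀ x, j (j x) = j x

theorem IsNuc.mono {j : A → A} (hj : IsNuc j) {x y : A} (h : x ≤ y) : j x ≤ j y := by
  have h2 := hj.map_inf x y
  rw [inf_eq_left.2 h] at h2
  rw [h2]; exact inf_le_right

def nucSet (R : Set (A × A)) : Set (A → A) :=
  {j | IsNuc j ∧ ∀ p ∈ R, j p.1 = j p.2}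

def nuc (R : Set (A × A)) : A → A := fun x => ⨅ j ∈ nucSet R, j x

theorem nuc_le {R : Set (A × A)} {j : A → A} (hj : j ∈ nucSet R) : ∀ x, nuc R x ≤ j x :=
  fun x => iInf₂_le j hj

theorem nuc_le_apply (R : Set (A × A)) (x : A) : x ≤ nuc R x :=
  le_iInf₂ fun _ hj => hj.1.le_apply x

theorem nuc_isNuc (R : Set (A × A)) : IsNuc (nuc R) where
  le_apply := nuc_le_apply R
  map_inf x y := by
    apply le_antisymm
    · exact le_inf (iInf₂_mono fun j hj => by rw [hj.1.map_inf]; exact inf_le_left)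
        (iInf₂_mono fun j hj => by rw [hj.1.map_inf]; exact inf_le_right)
    · exact le_iInf₂ fun j hj => by
        rw [hj.1.map_inf]
        exact inf_le_inf (nuc_le hj x) (nuc_le hj y)
  idem x := by
    refine le_antisymm (le_iInf₂ fun j hj => ?_) (nuc_le_apply R _)
    calc nuc R (nuc R x) ≤ j (nuc R x) := nuc_le hj _
      _ ≤ j (j x) := hj.1.mono (nuc_le hj x)
      _ = j x := hj.1.idem x

theorem nuc_collapse {R : Set (A × A)} {p : A × A} (hp : p ∈ R) : nuc R p.1 = nuc R p.2 := by
  unfold nuc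
  congr 1
  funext j
  congr 1
  funext hj
  exact hj.2 p hp

/-- The quotient frame: fixed points of `nuc R`. -/
abbrev Qt (R : Set (A × A)) : Type := {x : A // nuc R x = x}

namespace Qt

variable {R : Set (A × A)}

instance : PartialOrder (Qt R) := Subtype.partialOrder _

theorem fix_sInf (T : Set A) (hT : ∀ x ∈ T, nuc R x = x) : nuc R (sInf T) = sInf T := by
  refine le_antisymm (le_sInf fun x hx => ?_) (nuc_le_apply R _)
  rw [← hT x hx]
  exact (nuc_isNuc R).mono (sInf_le hx)

instance : InfSet (Qt R) :=
  ⟨fun S => ⟨sInf (Subtype.val '' S), fix_sInf _ (by rintro x ⟨⟨y, hy⟩, hmem, rfl⟩; exact hy)⟩⟩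

theorem sInf_val (S : Set (Qt R)) : (sInf S).val = sInf (Subtype.val '' S) := rfl

instance : CompleteLattice (Qt R) :=
  completeLatticeOfInf _ (by
    intro S
    constructor
    · intro z hz
      exact sInf_le (Set.mem_image_of_mem _ hz)
    · intro b hb
      refine le_sInf ?_
      rintro x ⟨y, hy, rfl⟩
      exact hb hy)

theorem coe_le_coe {a b : Qt R} : a ≤ b ↔ a.val ≤ b.val := Iff.rfl

theorem ext' {a b : Qt R} (h : a.val = b.val) : a = b := Subtype.ext h

theorem inf_val (a b : Qt R) : (a ⊓ b).val = a.val ⊓ b.val := by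
  show (sInf {a, b}).val = _
  rw [sInf_val, Set.image_pair, sInf_pair]

theorem top_val : (⊤ : Qt R).val = ⊤ := by
  show (sInf (∅ : Set (Qt R))).val = _
  rw [sInf_val, Set.image_empty, sInf_empty]

theorem isLUB_nuc (S : Set (Qt R)) :
    IsLUB S ⟨nuc R (sSup (Subtype.val '' S)), (nuc_isNuc R).idem _⟩ := by
  constructor
  · intro z hz
    show z.val ≤ nuc R (sSup (Subtype.val '' S))
    exact le_trans (le_sSup (Set.mem_image_of_mem _ hz)) (nuc_le_apply R _)
  · intro b hb
    show nuc R (sSup (Subtype.val '' S)) ≤ b.val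
    rw [← b.property]
    refine (nuc_isNuc R).mono (sSup_le ?_)
    rintro x ⟨y, hy, rfl⟩
    exact hb hy

theorem sSup_val (S : Set (Qt R)) : (sSup S).val = nuc R (sSup (Subtype.val '' S)) :=
  congrArg Subtype.val (isLUB_nuc S).sSup_eq

instance : Order.Frame (Qt R) := Order.Frame.ofMinimalAxioms
  { inf_sSup_le_iSup_inf := by
      intro a S
      rw [coe_le_coe, inf_val, sSup_val]
      have key : a.val ⊓ nuc R (sSup (Subtype.val '' S)) ≤
          nuc R (⨆ b ∈ S, a.val ⊓ b.val) := by
        calc a.val ⊓ nuc R (sSup (Subtype.val '' S))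
            = nuc R a.val ⊓ nuc R (sSup (Subtype.val '' S)) := by rw [a.property]
          _ = nuc R (a.val ⊓ sSup (Subtype.val '' S)) := ((nuc_isNuc R).map_inf _ _).symm
          _ = nuc R (⨆ b ∈ Subtype.val '' S, a.val ⊓ b) := by rw [inf_sSup_eq]
          _ ≤ nuc R (⨆ b ∈ S, a.val ⊓ b.val) := by
              exact (nuc_isNuc R).mono (le_of_eq (iSup_image ..))
      have hval : (⨆ b ∈ S, a ⊓ b).val = nuc R (⨆ b ∈ S, a.val ⊓ b.val) := by
        rw [← sSup_image, sSup_val, Set.image_image]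
        congr 1
        rw [← sSup_image]
        congr 1
        exact Set.image_congr fun b _ => inf_val a b
      rw [hval]
      exact key }

end Qt

variable {R : Set (A × A)} {Q : Type} [Order.Frame Q]

theorem nuc_sSup_nuc (R : Set (A × A)) (s : Set A) :
    nuc R (sSup (nuc R '' s)) = nuc R (sSup s) := by
  apply le_antisymm
  · have : sSup (nuc R '' s) ≤ nuc R (sSup s) := by
      refine sSup_le ?_
      rintro x ⟨y, hy, rfl⟩
      exact (nuc_isNuc R).mono (le_sSup hy)
    exact le_trans ((nuc_isNuc R).mono this) (le_of_eq ((nuc_isNuc R).idem _))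
  · refine (nuc_isNuc R).mono (sSup_le fun x hx => ?_)
    exact le_trans (nuc_le_apply R x) (le_sSup (Set.mem_image_of_mem _ hx))

/-- The quotient frame homomorphism. -/
def qmap (R : Set (A × A)) : FrameHom A (Qt R) where
  toFun x := ⟨nuc R x, (nuc_isNuc R).idem x⟩
  map_inf' x y := Qt.ext' (by rw [Qt.inf_val]; exact (nuc_isNuc R).map_inf x y)
  map_top' := Qt.ext' (by
    rw [Qt.top_val]; exact le_antisymm le_top (nuc_le_apply R ⊤))
  map_sSup' s := Qt.ext' (by
    rw [Qt.sSup_val, Set.image_image]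
    exact (nuc_sSup_nuc R s).symm)

theorem qmap_val (x : A) : (qmap R x).val = nuc R x := rfl

theorem qmap_surjective : Function.Surjective (qmap R) := by
  rintro ⟨x, hx⟩
  exact ⟨x, Qt.ext' hx⟩

theorem qmap_eq_iff {x y : A} : qmap R x = qmap R y ↔ nuc R x = nuc R y :=
  Subtype.ext_iff

theorem qmap_collapse {p : A × A} (hp : p ∈ R) : qmap R p.1 = qmap R p.2 :=
  qmap_eq_iff.2 (nuc_collapse hp)

/-- The kernel nucleus of a frame homomorphism. -/
def kerNuc (v : FrameHom A Q) : A → A := fun x => sSup {y | v y ≤ v x}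

theorem kerNuc_apply_eq (v : FrameHom A Q) (x : A) : v (kerNuc v x) = v x := by
  unfold kerNuc
  rw [map_sSup]
  apply le_antisymm
  · refine sSup_le ?_
    rintro z ⟨y, hy, rfl⟩
    exact hy
  · exact le_sSup ⟨x, le_rfl, rfl⟩

theorem kerNuc_isNuc (v : FrameHom A Q) : IsNuc (kerNuc v) where
  le_apply x := le_sSup le_rfl
  map_inf x y := by
    apply le_antisymm
    · exact le_inf (sSup_le_sSup fun z hz => le_trans hz (by simp))
        (sSup_le_sSup fun z hz => le_trans hz (by simp))
    · refine le_sSup ?_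
      show v (kerNuc v x ⊓ kerNuc v y) ≤ v (x ⊓ y)
      rw [map_inf, map_inf, kerNuc_apply_eq, kerNuc_apply_eq]
  idem x := by
    show kerNuc v (kerNuc v x) = _
    unfold kerNuc
    rw [show v (sSup {y | v y ≤ v x}) = v x from kerNuc_apply_eq v x]

theorem kerNuc_mem_nucSet (v : FrameHom A Q) (hv : ∀ p ∈ R, v p.1 = v p.2) :
    kerNuc v ∈ nucSet R := by
  refine ⟨kerNuc_isNuc v, fun p hp => ?_⟩
  unfold kerNuc
  rw [hv p hp]

theorem lift_aux (v : FrameHom A Q) (hv : ∀ p ∈ R, v p.1 = v p.2) (x : A) :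
    v (nuc R x) = v x := by
  apply le_antisymm
  · calc v (nuc R x) ≤ v (kerNuc v x) :=
          OrderHomClass.mono v (nuc_le (kerNuc_mem_nucSet v hv) x)
      _ = v x := kerNuc_apply_eq v x
  · exact OrderHomClass.mono v (nuc_le_apply R x)

/-- Lift a frame homomorphism collapsing `R` to the quotient. -/
def lift (v : FrameHom A Q) (hv : ∀ p ∈ R, v p.1 = v p.2) : FrameHom (Qt R) Q where
  toFun z := v z.val
  map_inf' a b := by show v (a ⊓ b).val = _; rw [Qt.inf_val, map_inf]
  map_top' := by show v (⊤ : Qt R).val = _; rw [Qt.top_val, map_top]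
  map_sSup' s := by
    show v (sSup s).val = _
    rw [Qt.sSup_val, lift_aux v hv, map_sSup, Set.image_image]

theorem lift_qmap (v : FrameHom A Q) (hv : ∀ p ∈ R, v p.1 = v p.2) (x : A) :
    lift v hv (qmap R x) = v x := lift_aux v hv x

theorem lift_val (v : FrameHom A Q) (hv : ∀ p ∈ R, v p.1 = v p.2) (z : Qt R) :
    lift v hv z = v z.val := rfl

end BFF

namespace BFF

/-! ### Generalities about biframe homomorphisms -/

theorem comm1_apply {P N : Biframe} (g : BiframeHom P N) (a : P.L1) :
    g.h0 (P.e1 a) = N.e1 (g.h1 a) := by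
  have := DFunLike.congr_fun g.comm1 a
  simpa using this

theorem comm2_apply {P N : Biframe} (g : BiframeHom P N) (b : P.L2) :
    g.h0 (P.e2 b) = N.e2 (g.h2 b) := by
  have := DFunLike.congr_fun g.comm2 b
  simpa using this

theorem map_decomp {P N : Biframe} (g : BiframeHom P N) (x : P.L0) (A : Set (P.L1 × P.L2))
    (hx : x = sSup ((fun p => P.e1 p.1 ⊓ P.e2 p.2) '' A)) :
    g.h0 x = sSup ((fun p => N.e1 (g.h1 p.1) ⊓ N.e2 (g.h2 p.2)) '' A) := by
  subst hx
  rw [map_sSup, Set.image_image]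
  congr 1
  refine Set.image_congr fun p _ => ?_
  rw [map_inf, comm1_apply, comm2_apply]

/-- A biframe homomorphism is determined by its two component maps. -/
theorem hom_determined {P N : Biframe} (g h : BiframeHom P N) (e1 : g.h1 = h.h1)
    (e2 : g.h2 = h.h2) : g = h := by
  ext : 1
  · refine FrameHom.ext fun x => ?_
    obtain ⟨A, hA⟩ := P.gen x
    rw [map_decomp g x A hA, map_decomp h x A hA, e1, e2]
  · exact e1
  · exact e2

theorem mono_of_inj {P N : Biframe} (m : BiframeHom P N) (i1 : Function.Injective m.h1)
    (i2 : Function.Injective m.h2) : m.IsMono := by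
  intro T g h hgh
  have c1 : m.h1.comp g.h1 = m.h1.comp h.h1 := congrArg BiframeHom.h1 hgh
  have c2 : m.h2.comp g.h2 = m.h2.comp h.h2 := congrArg BiframeHom.h2 hgh
  refine hom_determined g h ?_ ?_
  · exact FrameHom.ext fun x => i1 (by simpa using DFunLike.congr_fun c1 x)
  · exact FrameHom.ext fun x => i2 (by simpa using DFunLike.congr_fun c2 x)

theorem surj0_of_surj {P N : Biframe} (g : BiframeHom P N) (s1 : Function.Surjective g.h1)
    (s2 : Function.Surjective g.h2) : Function.Surjective g.h0 := by
  intro y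
  obtain ⟨A, hA⟩ := N.gen y
  refine ⟨sSup ((fun p => P.e1 p.1 ⊓ P.e2 p.2) '' {p : P.L1 × P.L2 | (g.h1 p.1, g.h2 p.2) ∈ A}),
    ?_⟩
  rw [map_decomp g _ _ rfl, hA]
  congr 1
  ext z
  constructor
  · rintro ⟨p, hp, rfl⟩
    exact ⟨(g.h1 p.1, g.h2 p.2), hp, rfl⟩
  · rintro ⟨p, hp, rfl⟩
    obtain ⟨a, ha⟩ := s1 p.1
    obtain ⟨b, hb⟩ := s2 p.2
    exact ⟨(a, b), by simp [ha, hb, hp], by simp [ha, hb]⟩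

/-! ### Test biframes used to show monos have injective components -/

/-- The unique frame homomorphism out of `Prop`. -/
def propHom (Q : Type) [Order.Frame Q] : FrameHom Prop Q where
  toFun p := ⨆ _ : p, ⊤
  map_inf' p q := by
    by_cases hp : p <;> by_cases hq : q <;>
      simp [hp, hq, inf_Prop_eq]
  map_top' := by simp
  map_sSup' s := by
    show (⨆ _ : sSup s, (⊤ : Q)) = _
    by_cases h : sSup s
    · rw [iSup_pos h]
      have h' := h
      rw [sSup_Prop_eq] at h'
      obtain ⟨p, hp, hpt⟩ := h'
      exact le_antisymm (le_sSup ⟨p, hp, by simp [hpt]⟩) le_top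
    · rw [iSup_neg h]
      refine (le_antisymm bot_le (sSup_le ?_)).symm.symm
      rintro x ⟨p, hp, rfl⟩
      have hnp : ¬ p := fun hpp => h (sSup_Prop_eq.symm ▸ ⟨p, hp, hpp⟩)
      simp [hnp]

theorem propHom_true {Q : Type} [Order.Frame Q] {p : Prop} (hp : p) : propHom Q p = ⊤ := by
  simp [propHom, hp]

theorem propHom_false {Q : Type} [Order.Frame Q] {p : Prop} (hp : ¬ p) : propHom Q p = ⊥ := by
  simp [propHom, hp]

theorem propHom_injective {Q : Type} [Order.Frame Q] (hQ : (⊥ : Q) ≠ ⊤) :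
    Function.Injective (propHom Q) := by
  intro p q h
  by_cases hp : p <;> by_cases hq : q
  · exact propext (iff_of_true hp hq)
  · rw [propHom_true hp, propHom_false hq] at h; exact absurd h.symm hQ
  · rw [propHom_false hp, propHom_true hq] at h; exact absurd h hQ
  · exact propext (iff_of_false hp hq)


/-- The frame homomorphism out of the three-element chain selecting an element. -/
noncomputable def chainHom {Q : Type} [Order.Frame Q] (a : Q) : FrameHom (Fin 3) Q where
  toFun i := if i = 0 then ⊥ else if i = 1 then a else ⊤
  map_inf' i j := by
    fin_cases i <;> fin_cases j <;> simp
  map_top' := by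
    show (if (⊤ : Fin 3) = 0 then ⊥ else if (⊤ : Fin 3) = 1 then a else ⊤) = ⊤
    rw [if_neg (by decide), if_neg (by decide)]
  map_sSup' s := by
    have hmono : Monotone (fun i : Fin 3 => if i = 0 then (⊥ : Q) else if i = 1 then a else ⊤) := by
      intro i j hij
      fin_cases i <;> fin_cases j <;> simp_all <;> omega
    show (fun i : Fin 3 => if i = 0 then (⊥ : Q) else if i = 1 then a else ⊤) (sSup s) = _
    apply le_antisymm
    · rcases s.eq_empty_or_nonempty with rfl | hs
      · simp only [Set.image_empty, sSup_empty]
        rw [if_pos (by decide)]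
      · have : sSup s ∈ s := Set.Nonempty.csSup_mem hs s.toFinite
        exact le_sSup (Set.mem_image_of_mem _ this)
    · refine sSup_le ?_
      rintro x ⟨i, hi, rfl⟩
      exact hmono (le_sSup hi)

@[simp] theorem chainHom_one {Q : Type} [Order.Frame Q] (a : Q) : chainHom a 1 = a := rfl

theorem chainHom_eval {Q : Type} [Order.Frame Q] (a : Q) (i : Fin 3) :
    chainHom a i = if i = 0 then ⊥ else if i = 1 then a else ⊤ := rfl

/-- Test biframe whose first component is the three-element chain. -/
noncomputable def testBi1 : Biframe where
  L0 := Fin 3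
  L1 := Fin 3
  L2 := Prop
  e1 := FrameHom.id _
  e2 := propHom (Fin 3)
  inj1 := fun _ _ h => h
  inj2 := propHom_injective (by decide)
  gen x := by
    refine ⟨{(x, True)}, ?_⟩
    rw [Set.image_singleton]
    simp [propHom_true trivial]

/-- Test biframe whose second component is the three-element chain. -/
noncomputable def testBi2 : Biframe where
  L0 := Fin 3
  L1 := Prop
  L2 := Fin 3
  e1 := propHom (Fin 3)
  e2 := FrameHom.id _
  inj1 := propHom_injective (by decide)
  inj2 := fun _ _ h => h
  gen x := by
    refine ⟨{(True, x)}, ?_⟩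
    rw [Set.image_singleton]
    simp [propHom_true trivial]

/-- The biframe homomorphism from `testBi1` selecting `a` in the first component. -/
noncomputable def tHom1 {P : Biframe} (a : P.L1) : BiframeHom testBi1 P where
  h0 := P.e1.comp (chainHom a)
  h1 := chainHom a
  h2 := propHom P.L2
  comm1 := by
    show (P.e1.comp (chainHom a)).comp (FrameHom.id _) = _
    rw [FrameHom.comp_id]
    rfl
  comm2 := by
    refine FrameHom.ext fun p => ?_
    show P.e1 (chainHom a (propHom (Fin 3) p)) = P.e2 (propHom P.L2 p)
    rcases Classical.em p with hp | hp
    · rw [propHom_true hp, propHom_true hp]; simp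
    · rw [propHom_false hp, propHom_false hp]; simp

/-- The biframe homomorphism from `testBi2` selecting `b` in the second component. -/
noncomputable def tHom2 {P : Biframe} (b : P.L2) : BiframeHom testBi2 P where
  h0 := P.e2.comp (chainHom b)
  h1 := propHom P.L1
  h2 := chainHom b
  comm2 := by
    show (P.e2.comp (chainHom b)).comp (FrameHom.id _) = _
    rw [FrameHom.comp_id]
    rfl
  comm1 := by
    refine FrameHom.ext fun p => ?_
    show P.e2 (chainHom b (propHom (Fin 3) p)) = P.e1 (propHom P.L1 p)
    rcases Classical.em p with hp | hp
    · rw [propHom_true hp, propHom_true hp]; simp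
    · rw [propHom_false hp, propHom_false hp]; simp

theorem mono_inj1 {P N : Biframe} (m : BiframeHom P N) (hm : m.IsMono) :
    Function.Injective m.h1 := by
  intro a b hab
  have key : m.comp (tHom1 a) = m.comp (tHom1 b) := by
    have hc : m.h1.comp (chainHom a) = m.h1.comp (chainHom b) := by
      refine FrameHom.ext fun i => ?_
      simp only [FrameHom.comp_apply, chainHom_eval]
      split_ifs <;> simp [hab]
    refine hom_determined _ _ ?_ rfl
    exact hc
  have := congrArg BiframeHom.h1 (hm _ _ _ key)
  have := DFunLike.congr_fun this (1 : Fin 3)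
  exact this

theorem mono_inj2 {P N : Biframe} (m : BiframeHom P N) (hm : m.IsMono) :
    Function.Injective m.h2 := by
  intro a b hab
  have key : m.comp (tHom2 a) = m.comp (tHom2 b) := by
    have hc : m.h2.comp (chainHom a) = m.h2.comp (chainHom b) := by
      refine FrameHom.ext fun i => ?_
      simp only [FrameHom.comp_apply, chainHom_eval]
      split_ifs <;> simp [hab]
    refine hom_determined _ _ rfl ?_
    exact hc
  have := congrArg BiframeHom.h2 (hm _ _ _ key)
  have := DFunLike.congr_fun this (1 : Fin 3)
  exact this

end BFF

namespace BFF

/-! ### The image biframe of a biframe homomorphism -/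

section Main

variable {L M : Biframe}

def R1 (f : BiframeHom L M) : Set (L.L1 × L.L1) := {p | f.h1 p.1 = f.h1 p.2}

def R2 (f : BiframeHom L M) : Set (L.L2 × L.L2) := {p | f.h2 p.1 = f.h2 p.2}

def R0 (f : BiframeHom L M) : Set (L.L0 × L.L0) :=
  {p | (∃ a a', f.h1 a = f.h1 a' ∧ p.1 = L.e1 a ∧ p.2 = L.e1 a') ∨
       (∃ b b', f.h2 b = f.h2 b' ∧ p.1 = L.e2 b ∧ p.2 = L.e2 b')}

theorem collapses_R0 (f : BiframeHom L M) {Q : Type} [Order.Frame Q] (v : FrameHom L.L0 Q)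
    (hc1 : ∀ a a', f.h1 a = f.h1 a' → v (L.e1 a) = v (L.e1 a'))
    (hc2 : ∀ b b', f.h2 b = f.h2 b' → v (L.e2 b) = v (L.e2 b')) :
    ∀ p ∈ R0 f, v p.1 = v p.2 := by
  rintro p (⟨a, a', h, hp1, hp2⟩ | ⟨b, b', h, hp1, hp2⟩) <;> rw [hp1, hp2]
  · exact hc1 a a' h
  · exact hc2 b b' h

theorem fh0col (f : BiframeHom L M) : ∀ p ∈ R0 f, f.h0 p.1 = f.h0 p.2 :=
  collapses_R0 f f.h0
    (fun a a' h => by rw [comm1_apply, comm1_apply, h])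
    (fun b b' h => by rw [comm2_apply, comm2_apply, h])

theorem q0col1 (f : BiframeHom L M) {a a' : L.L1} (h : f.h1 a = f.h1 a') :
    qmap (R0 f) (L.e1 a) = qmap (R0 f) (L.e1 a') :=
  qmap_collapse (p := (L.e1 a, L.e1 a')) (Or.inl ⟨a, a', h, rfl, rfl⟩)

theorem q0col2 (f : BiframeHom L M) {b b' : L.L2} (h : f.h2 b = f.h2 b') :
    qmap (R0 f) (L.e2 b) = qmap (R0 f) (L.e2 b') :=
  qmap_collapse (p := (L.e2 b, L.e2 b')) (Or.inr ⟨b, b', h, rfl, rfl⟩)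

/-- The image biframe `(f(L), f[L₁], f[L₂])`. -/
noncomputable def imageBi (f : BiframeHom L M) : Biframe where
  L0 := Qt (R0 f)
  L1 := Qt (R1 f)
  L2 := Qt (R2 f)
  e1 := lift ((qmap (R0 f)).comp L.e1)
    (fun p hp => by simpa using q0col1 f (show f.h1 p.1 = f.h1 p.2 from hp))
  e2 := lift ((qmap (R0 f)).comp L.e2)
    (fun p hp => by simpa using q0col2 f (show f.h2 p.1 = f.h2 p.2 from hp))
  inj1 := by
    intro z z' h
    obtain ⟨a, rfl⟩ := qmap_surjective z
    obtain ⟨a', rfl⟩ := qmap_surjective z'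
    rw [lift_qmap, lift_qmap] at h
    have h2 := congrArg (lift f.h0 (fh0col f)) h
    simp only [FrameHom.comp_apply, lift_qmap] at h2
    rw [comm1_apply, comm1_apply] at h2
    exact qmap_collapse (p := (a, a')) (M.inj1 h2)
  inj2 := by
    intro z z' h
    obtain ⟨b, rfl⟩ := qmap_surjective z
    obtain ⟨b', rfl⟩ := qmap_surjective z'
    rw [lift_qmap, lift_qmap] at h
    have h2 := congrArg (lift f.h0 (fh0col f)) h
    simp only [FrameHom.comp_apply, lift_qmap] at h2
    rw [comm2_apply, comm2_apply] at h2
    exact qmap_collapse (p := (b, b')) (M.inj2 h2)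
  gen := by
    intro z
    obtain ⟨x, rfl⟩ := qmap_surjective z
    obtain ⟨A, hA⟩ := L.gen x
    refine ⟨(fun p => (qmap (R1 f) p.1, qmap (R2 f) p.2)) '' A, ?_⟩
    rw [hA, map_sSup, Set.image_image, Set.image_image]
    congr 1
    refine Set.image_congr fun p _ => ?_
    rw [map_inf, lift_qmap, lift_qmap]
    rfl

theorem imageBi_e1_qmap (f : BiframeHom L M) (a : L.L1) :
    (imageBi f).e1 (qmap (R1 f) a) = qmap (R0 f) (L.e1 a) :=
  lift_qmap ((qmap (R0 f)).comp L.e1)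
    (fun p hp => by simpa using q0col1 f (show f.h1 p.1 = f.h1 p.2 from hp)) a

theorem imageBi_e2_qmap (f : BiframeHom L M) (b : L.L2) :
    (imageBi f).e2 (qmap (R2 f) b) = qmap (R0 f) (L.e2 b) :=
  lift_qmap ((qmap (R0 f)).comp L.e2)
    (fun p hp => by simpa using q0col2 f (show f.h2 p.1 = f.h2 p.2 from hp)) b

/-- The corestriction of `f` to its image. -/
noncomputable def fbarB (f : BiframeHom L M) : BiframeHom L (imageBi f) where
  h0 := qmap (R0 f)
  h1 := qmap (R1 f)
  h2 := qmap (R2 f)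
  comm1 := FrameHom.ext fun a => (imageBi_e1_qmap f a).symm
  comm2 := FrameHom.ext fun b => (imageBi_e2_qmap f b).symm

/-- The inclusion of the image in the codomain. -/
noncomputable def eB (f : BiframeHom L M) : BiframeHom (imageBi f) M where
  h0 := lift f.h0 (fh0col f)
  h1 := lift f.h1 (fun _ hp => hp)
  h2 := lift f.h2 (fun _ hp => hp)
  comm1 := by
    refine FrameHom.ext fun z => ?_
    obtain ⟨a, rfl⟩ := qmap_surjective z
    show lift f.h0 (fh0col f) ((imageBi f).e1 (qmap (R1 f) a)) = M.e1 (lift f.h1 _ (qmap _ a))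
    rw [imageBi_e1_qmap, lift_qmap]
    exact (comm1_apply f a).trans (congrArg M.e1 (lift_qmap (R := R1 f) f.h1 (fun _ hp => hp) a).symm)
  comm2 := by
    refine FrameHom.ext fun z => ?_
    obtain ⟨b, rfl⟩ := qmap_surjective z
    show lift f.h0 (fh0col f) ((imageBi f).e2 (qmap (R2 f) b)) = M.e2 (lift f.h2 _ (qmap _ b))
    rw [imageBi_e2_qmap, lift_qmap]
    exact (comm2_apply f b).trans (congrArg M.e2 (lift_qmap (R := R2 f) f.h2 (fun _ hp => hp) b).symm)

end Main
end BFF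

namespace BFF

section Final

variable {L M : Biframe} (f : BiframeHom L M)

theorem fact_eq : f = (eB f).comp (fbarB f) := by
  refine hom_determined _ _ ?_ ?_
  · exact FrameHom.ext fun x => (lift_qmap f.h1 (fun _ hp => hp) x).symm
  · exact FrameHom.ext fun x => (lift_qmap f.h2 (fun _ hp => hp) x).symm

theorem fbar_epi : (fbarB f).IsEpi := by
  intro T g h hgh
  refine hom_determined _ _ ?_ ?_
  · refine FrameHom.ext fun z => ?_
    obtain ⟨a, rfl⟩ := qmap_surjective z
    exact DFunLike.congr_fun (congrArg BiframeHom.h1 hgh) a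
  · refine FrameHom.ext fun z => ?_
    obtain ⟨b, rfl⟩ := qmap_surjective z
    exact DFunLike.congr_fun (congrArg BiframeHom.h2 hgh) b

theorem eB_h1_qmap (a : L.L1) : (eB f).h1 (qmap (R1 f) a) = f.h1 a :=
  lift_qmap f.h1 (fun _ hp => hp) a

theorem eB_h2_qmap (b : L.L2) : (eB f).h2 (qmap (R2 f) b) = f.h2 b :=
  lift_qmap f.h2 (fun _ hp => hp) b

theorem e_inj1 : Function.Injective (eB f).h1 := by
  intro z z' h
  obtain ⟨a, rfl⟩ := qmap_surjective z
  obtain ⟨a', rfl⟩ := qmap_surjective z'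
  rw [eB_h1_qmap, eB_h1_qmap] at h
  exact qmap_collapse (p := (a, a')) h

theorem e_inj2 : Function.Injective (eB f).h2 := by
  intro z z' h
  obtain ⟨b, rfl⟩ := qmap_surjective z
  obtain ⟨b', rfl⟩ := qmap_surjective z'
  rw [eB_h2_qmap, eB_h2_qmap] at h
  exact qmap_collapse (p := (b, b')) h

theorem fbarB_h1 : (fbarB f).h1 = qmap (R1 f) := rfl
theorem fbarB_h2 : (fbarB f).h2 = qmap (R2 f) := rfl
theorem fbarB_h0 : (fbarB f).h0 = qmap (R0 f) := rfl

theorem fbar_pushout : (fbarB f).IsCanonicalPushout := by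
  intro K _ i1 i2 hK qL hqL1 hqL2 K' _ j1 j2 hK' qN hqN1 hqN2 F hF1 hF2
  constructor
  · -- commutativity of the square
    obtain ⟨k, -, hu⟩ := hK (Qt (R0 f)) (((imageBi f).e1).comp (qmap (R1 f)))
      (((imageBi f).e2).comp (qmap (R2 f)))
    have h11 : (qN.comp F).comp i1 = ((imageBi f).e1).comp (qmap (R1 f)) := by
      rw [FrameHom.comp_assoc, hF1, ← FrameHom.comp_assoc, hqN1, fbarB_h1]
    have h12 : (qN.comp F).comp i2 = ((imageBi f).e2).comp (qmap (R2 f)) := by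
      rw [FrameHom.comp_assoc, hF2, ← FrameHom.comp_assoc, hqN2, fbarB_h2]
    have h21 : (((fbarB f).h0).comp qL).comp i1 = ((imageBi f).e1).comp (qmap (R1 f)) := by
      rw [FrameHom.comp_assoc, hqL1, (fbarB f).comm1, fbarB_h1]
    have h22 : (((fbarB f).h0).comp qL).comp i2 = ((imageBi f).e2).comp (qmap (R2 f)) := by
      rw [FrameHom.comp_assoc, hqL2, (fbarB f).comm2, fbarB_h2]
    exact (hu _ ⟨h11, h12⟩).trans (hu _ ⟨h21, h22⟩).symm
  · intro Q _ u v huv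
    have key1 : ∀ a : L.L1, v (L.e1 a) = u (j1 (qmap (R1 f) a)) := by
      intro a
      calc v (L.e1 a) = v (qL (i1 a)) := by rw [← hqL1]; rfl
        _ = u (F (i1 a)) := (DFunLike.congr_fun huv (i1 a)).symm
        _ = u (j1 (qmap (R1 f) a)) := by
            rw [show F (i1 a) = j1 (qmap (R1 f) a) from DFunLike.congr_fun hF1 a]
    have key2 : ∀ b : L.L2, v (L.e2 b) = u (j2 (qmap (R2 f) b)) := by
      intro b
      calc v (L.e2 b) = v (qL (i2 b)) := by rw [← hqL2]; rfl
        _ = u (F (i2 b)) := (DFunLike.congr_fun huv (i2 b)).symm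
        _ = u (j2 (qmap (R2 f) b)) := by
            rw [show F (i2 b) = j2 (qmap (R2 f) b) from DFunLike.congr_fun hF2 b]
    have hcol : ∀ p ∈ R0 f, v p.1 = v p.2 := by
      refine collapses_R0 f v (fun a a' hh => ?_) (fun b b' hh => ?_)
      · rw [key1, key1, qmap_collapse (p := (a, a')) hh]
      · rw [key2, key2, qmap_collapse (p := (b, b')) hh]
    refine ⟨lift v hcol, ⟨?_, ?_⟩, ?_⟩
    · -- (lift v hcol).comp qN = u
      obtain ⟨k', -, hu'⟩ := hK' Q (u.comp j1) (u.comp j2)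
      refine ((hu' _ ⟨?_, ?_⟩).trans (hu' u ⟨rfl, rfl⟩).symm)
      · refine FrameHom.ext fun c => ?_
        obtain ⟨a, rfl⟩ := qmap_surjective c
        show lift v hcol (qN (j1 (qmap (R1 f) a))) = u (j1 (qmap (R1 f) a))
        rw [show qN (j1 (qmap (R1 f) a)) = (imageBi f).e1 (qmap (R1 f) a) from
            DFunLike.congr_fun hqN1 (qmap (R1 f) a), imageBi_e1_qmap, lift_qmap]
        exact key1 a
      · refine FrameHom.ext fun c => ?_
        obtain ⟨b, rfl⟩ := qmap_surjective c
        show lift v hcol (qN (j2 (qmap (R2 f) b))) = u (j2 (qmap (R2 f) b))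
        rw [show qN (j2 (qmap (R2 f) b)) = (imageBi f).e2 (qmap (R2 f) b) from
            DFunLike.congr_fun hqN2 (qmap (R2 f) b), imageBi_e2_qmap, lift_qmap]
        exact key2 b
    · exact FrameHom.ext fun x => lift_qmap v hcol x
    · rintro k ⟨-, hk2⟩
      refine FrameHom.ext fun z => ?_
      obtain ⟨x, rfl⟩ := qmap_surjective z
      calc k (qmap (R0 f) x) = v x := DFunLike.congr_fun hk2 x
        _ = lift v hcol (qmap (R0 f) x) := (lift_qmap v hcol x).symm

theorem fbar_extremal : (fbarB f).IsExtremalEpi := by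
  refine ⟨fbar_epi f, ?_⟩
  intro P h m hm heq
  have hq1 : ∀ a, m.h1 (h.h1 a) = qmap (R1 f) a := fun a =>
    (DFunLike.congr_fun (congrArg BiframeHom.h1 heq) a).symm
  have hq2 : ∀ b, m.h2 (h.h2 b) = qmap (R2 f) b := fun b =>
    (DFunLike.congr_fun (congrArg BiframeHom.h2 heq) b).symm
  have hq0 : ∀ x, m.h0 (h.h0 x) = qmap (R0 f) x := fun x =>
    (DFunLike.congr_fun (congrArg BiframeHom.h0 heq) x).symm
  have i1 := mono_inj1 m hm
  have i2 := mono_inj2 m hm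
  have s1 : Function.Surjective h.h1 := by
    intro p
    obtain ⟨a, ha⟩ := qmap_surjective (R := R1 f) (m.h1 p)
    exact ⟨a, i1 (by rw [hq1 a, ha])⟩
  have s2 : Function.Surjective h.h2 := by
    intro p
    obtain ⟨b, hb⟩ := qmap_surjective (R := R2 f) (m.h2 p)
    exact ⟨b, i2 (by rw [hq2 b, hb])⟩
  have hcolh1 : ∀ a a', f.h1 a = f.h1 a' → h.h1 a = h.h1 a' := fun a a' hh =>
    i1 (by rw [hq1 a, hq1 a']; exact qmap_collapse (p := (a, a')) hh)
  have hcolh2 : ∀ b b', f.h2 b = f.h2 b' → h.h2 b = h.h2 b' := fun b b' hh =>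
    i2 (by rw [hq2 b, hq2 b']; exact qmap_collapse (p := (b, b')) hh)
  have hcol0 : ∀ p ∈ R0 f, h.h0 p.1 = h.h0 p.2 :=
    collapses_R0 f h.h0
      (fun a a' hh => by rw [comm1_apply, comm1_apply, hcolh1 a a' hh])
      (fun b b' hh => by rw [comm2_apply, comm2_apply, hcolh2 b b' hh])
  have colP1 : ∀ p ∈ R1 f, h.h1 p.1 = h.h1 p.2 := fun p hp => hcolh1 p.1 p.2 hp
  have colP2 : ∀ p ∈ R2 f, h.h2 p.1 = h.h2 p.2 := fun p hp => hcolh2 p.1 p.2 hp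
  refine ⟨⟨lift h.h0 hcol0, lift h.h1 colP1, lift h.h2 colP2, ?_, ?_⟩, ?_, ?_⟩
  · -- comm1
    refine FrameHom.ext fun z => ?_
    obtain ⟨a, rfl⟩ := qmap_surjective z
    show lift h.h0 hcol0 ((imageBi f).e1 (qmap (R1 f) a)) = P.e1 (lift h.h1 colP1 (qmap (R1 f) a))
    rw [imageBi_e1_qmap, lift_qmap, lift_qmap, comm1_apply]
  · -- comm2
    refine FrameHom.ext fun z => ?_
    obtain ⟨b, rfl⟩ := qmap_surjective z
    show lift h.h0 hcol0 ((imageBi f).e2 (qmap (R2 f) b)) = P.e2 (lift h.h2 colP2 (qmap (R2 f) b))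
    rw [imageBi_e2_qmap, lift_qmap, lift_qmap, comm2_apply]
  · -- g.comp m = id P
    refine hom_determined _ _ ?_ ?_
    · refine FrameHom.ext fun p => ?_
      obtain ⟨a, rfl⟩ := s1 p
      show lift h.h1 colP1 (m.h1 (h.h1 a)) = h.h1 a
      rw [hq1 a, lift_qmap]
    · refine FrameHom.ext fun p => ?_
      obtain ⟨b, rfl⟩ := s2 p
      show lift h.h2 colP2 (m.h2 (h.h2 b)) = h.h2 b
      rw [hq2 b, lift_qmap]
  · -- m.comp g = id N
    refine hom_determined _ _ ?_ ?_
    · refine FrameHom.ext fun z => ?_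
      obtain ⟨a, rfl⟩ := qmap_surjective z
      show m.h1 (lift h.h1 colP1 (qmap (R1 f) a)) = qmap (R1 f) a
      rw [lift_qmap]
      exact hq1 a
    · refine FrameHom.ext fun z => ?_
      obtain ⟨b, rfl⟩ := qmap_surjective z
      show m.h2 (lift h.h2 colP2 (qmap (R2 f) b)) = qmap (R2 f) b
      rw [lift_qmap]
      exact hq2 b

end Final
end BFF

/-- Every biframe homomorphism `f : L → M` factors as `f = e ∘ f̄`, where
`f̄ : L → (f(L), f[L₁], f[L₂])` is an extremal epimorphism of biframes (in particular its
components are surjective and `f(L)` is the pushout in `Frm` of `f₁ ⊕ f₂` along the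
quotient map `q_L : L₁ ⊕ L₂ → L₀`) and `e : (f(L), f[L₁], f[L₂]) → M` is a monomorphism
(with injective components). -/
theorem biframe_factorization {L M : Biframe} (f : BiframeHom L M) :
    ∃ (N : Biframe) (fbar : BiframeHom L N) (e : BiframeHom N M),
      f = e.comp fbar ∧
      fbar.IsExtremalEpi ∧
      Function.Surjective fbar.h1 ∧ Function.Surjective fbar.h2 ∧
      fbar.IsCanonicalPushout ∧
      e.IsMono ∧ Function.Injective e.h1 ∧ Function.Injective e.h2 := by
  exact ⟨BFF.imageBi f, BFF.fbarB f, BFF.eB f, BFF.fact_eq f, BFF.fbar_extremal f,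
    BFF.qmap_surjective, BFF.qmap_surjective, BFF.fbar_pushout f,
    BFF.mono_of_inj _ (BFF.e_inj1 f) (BFF.e_inj2 f), BFF.e_inj1 f, BFF.e_inj2 f⟩
end

section
/- A biframe homomorphism f : L → M is an extremal epimorphism in BiFrm if and only if both restrictions f₁ : L₁ → M₁ and f₂ : L₂ → M₂ are surjective and the underlying frame homomorphism f₀ : L₀ → M₀ is the pushout in Frm of f₁ ⊕ f₂ along the canonical quotient map q_L : L₁ ⊕ L₂ → L₀. -/
section Infra
variable {X Y Z : Type} [Order.Frame X] [Order.Frame Y] [Order.Frame Z]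

/-- A subframe: a subset of a frame closed under arbitrary joins, binary meets and top. -/
structure Subframe (X : Type) [Order.Frame X] where
  carrier : Set X
  sSup_mem' : ∀ T : Set X, T ⊆ carrier → sSup T ∈ carrier
  inf_mem' : ∀ a ∈ carrier, ∀ b ∈ carrier, a ⊓ b ∈ carrier
  top_mem' : (⊤ : X) ∈ carrier

namespace Subframe

instance : Membership X (Subframe X) := ⟨fun S x => x ∈ S.carrier⟩
instance : CoeSort (Subframe X) Type := ⟨fun S => {x : X // x ∈ S.carrier}⟩

variable (S : Subframe X)

theorem sSup_mem {T : Set X} (h : T ⊆ S.carrier) : sSup T ∈ S := S.sSup_mem' T h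
theorem inf_mem {a b : X} (ha : a ∈ S) (hb : b ∈ S) : a ⊓ b ∈ S := S.inf_mem' a ha b hb
theorem top_mem : (⊤ : X) ∈ S := S.top_mem'

instance : SupSet S :=
  ⟨fun T => ⟨sSup ((↑) '' T), S.sSup_mem (by rintro x ⟨y, _, rfl⟩; exact y.2)⟩⟩

def completeLattice : CompleteLattice S := by
  refine completeLatticeOfSup S (fun T => ⟨fun x hx => ?_, fun b hb => ?_⟩)
  · exact Subtype.coe_le_coe.1 (le_sSup (Set.mem_image_of_mem _ hx))
  · refine Subtype.coe_le_coe.1 (sSup_le ?_)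
    rintro y ⟨x, hx, rfl⟩
    exact Subtype.coe_le_coe.2 (hb hx)

theorem coe_sSup_cl (T : Set S) :
    ((@SupSet.sSup S (@CompleteLattice.toSupSet S S.completeLattice) T : S) : X) =
      sSup ((↑) '' T) := rfl

theorem coe_top_cl : ((@Top.top S (@OrderTop.toTop S _ (@BoundedOrder.toOrderTop S _ (@CompleteLattice.toBoundedOrder S S.completeLattice))) : S) : X) = ⊤ := by
  letI := S.completeLattice
  refine le_antisymm le_top ?_
  exact Subtype.coe_le_coe.2 (@le_top S _ (@BoundedOrder.toOrderTop S _ (@CompleteLattice.toBoundedOrder S S.completeLattice)) ⟨⊤, S.top_mem⟩)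

theorem coe_inf_cl (a b : S) :
    ((@Min.min S (@SemilatticeInf.toMin S (@Lattice.toSemilatticeInf S (@CompleteLattice.toLattice S S.completeLattice))) a b : S) : X)
      = (a : X) ⊓ (b : X) := by
  letI := S.completeLattice
  refine le_antisymm
    (le_inf (Subtype.coe_le_coe.2 inf_le_left) (Subtype.coe_le_coe.2 inf_le_right)) ?_
  have hm : (a : X) ⊓ (b : X) ∈ S := S.inf_mem a.2 b.2
  have : (⟨(a : X) ⊓ b, hm⟩ : S) ≤ a ⊓ b :=
    le_inf (Subtype.coe_le_coe.1 inf_le_left) (Subtype.coe_le_coe.1 inf_le_right)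
  exact Subtype.coe_le_coe.2 this

instance frame : Order.Frame S := by
  letI := S.completeLattice
  refine Order.Frame.ofMinimalAxioms ⟨?_⟩
  intro a s
  letI := S.completeLattice
  refine Subtype.coe_le_coe.1 ?_
  rw [S.coe_inf_cl, S.coe_sSup_cl, inf_sSup_eq]
  refine iSup₂_le ?_
  rintro b ⟨x, hx, rfl⟩
  calc (a : X) ⊓ (x : X) = ((a ⊓ x : S) : X) := (S.coe_inf_cl a x).symm
    _ ≤ _ := Subtype.coe_le_coe.2 (le_iSup₂_of_le x hx (le_refl (a ⊓ x)))

@[simp] theorem coe_sSup (T : Set S) : ((sSup T : S) : X) = sSup ((↑) '' T) := rfl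
@[simp] theorem coe_top : (((⊤ : S)) : X) = (⊤ : X) := S.coe_top_cl
@[simp] theorem coe_inf (a b : S) : ((a ⊓ b : S) : X) = (a : X) ⊓ (b : X) := S.coe_inf_cl a b

def incl : FrameHom S X := ⟨⟨⟨(↑), S.coe_inf⟩, S.coe_top⟩, S.coe_sSup⟩

@[simp] theorem incl_apply (a : S) : S.incl a = (a : X) := rfl

theorem incl_injective : Function.Injective S.incl := fun a b h => Subtype.ext h

/-- Corestriction of a frame hom to a subframe containing its range. -/
def corestrict (f : FrameHom Y X) (hf : ∀ y, f y ∈ S) : FrameHom Y S := by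
  refine ⟨⟨⟨fun y => ⟨f y, hf y⟩, fun a b => ?_⟩, ?_⟩, fun s => ?_⟩
  · exact Subtype.ext (by simpa using map_inf f a b)
  · exact Subtype.ext (by simpa using map_top f)
  · refine Subtype.ext ?_
    show f (sSup s) = ((sSup _ : S) : X)
    rw [S.coe_sSup, map_sSup, ← Set.image_comp]
    rfl

@[simp] theorem corestrict_apply (f : FrameHom Y X) (hf : ∀ y, f y ∈ S) (y : Y) :
    ((S.corestrict f hf y : S) : X) = f y := rfl

theorem corestrict_injective (f : FrameHom Y X) (hf : ∀ y, f y ∈ S)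
    (h : Function.Injective f) : Function.Injective (S.corestrict f hf) := fun a b hab => by
  apply h; have := congrArg (Subtype.val) hab; simpa using this

theorem incl_comp_corestrict (f : FrameHom Y X) (hf : ∀ y, f y ∈ S) :
    S.incl.comp (S.corestrict f hf) = f := FrameHom.ext fun y => rfl

end Subframe

/-- The range of a frame hom is a subframe. -/
def FrameHom.rangeSubframe (f : FrameHom Y X) : Subframe X := by
  refine ⟨Set.range f, fun T hT => ?_, ?_, ?_⟩
  · rw [← Set.image_preimage_eq_of_subset hT, ← map_sSup]
    exact Set.mem_range_self _
  · rintro a ⟨x, rfl⟩ b ⟨y, rfl⟩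
    exact ⟨x ⊓ y, map_inf f x y⟩
  · exact ⟨⊤, map_top f⟩

theorem FrameHom.mem_rangeSubframe (f : FrameHom Y X) (y : Y) : f y ∈ f.rangeSubframe :=
  Set.mem_range_self _

/-- Pairing of two frame homs into the product frame. -/
def FrameHom.prodMk (f : FrameHom X Y) (g : FrameHom X Z) : FrameHom X (Y × Z) where
  toFun x := (f x, g x)
  map_inf' a b := by simp [Prod.ext_iff]
  map_top' := by simp [Prod.ext_iff, Prod.fst_top, Prod.snd_top]
  map_sSup' s := by
    refine Prod.ext ?_ ?_
    · show f (sSup s) = (sSup ((fun x => (f x, g x)) '' s)).1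
      rw [Prod.fst_sSup, map_sSup, ← Set.image_comp]
      rfl
    · show g (sSup s) = (sSup ((fun x => (f x, g x)) '' s)).2
      rw [Prod.snd_sSup, map_sSup, ← Set.image_comp]
      rfl

@[simp] theorem FrameHom.prodMk_apply (f : FrameHom X Y) (g : FrameHom X Z) (x : X) :
    f.prodMk g x = (f x, g x) := rfl

end Infra

section Infra2
variable {X Y Z : Type} [Order.Frame X] [Order.Frame Y] [Order.Frame Z]

def FrameHom.fst : FrameHom (Y × Z) Y where
  toFun := Prod.fst
  map_inf' _ _ := rfl
  map_top' := rfl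
  map_sSup' s := by show (sSup s).1 = _; rw [Prod.fst_sSup]

def FrameHom.snd : FrameHom (Y × Z) Z where
  toFun := Prod.snd
  map_inf' _ _ := rfl
  map_top' := rfl
  map_sSup' s := by show (sSup s).2 = _; rw [Prod.snd_sSup]

@[simp] theorem FrameHom.fst_apply (p : Y × Z) : (FrameHom.fst : FrameHom (Y × Z) Y) p = p.1 := rfl
@[simp] theorem FrameHom.snd_apply (p : Y × Z) : (FrameHom.snd : FrameHom (Y × Z) Z) p = p.2 := rfl

/-- Inverse of a bijective frame hom, as a frame hom. -/
noncomputable def FrameHom.inverse (f : FrameHom X Y) (hf : Function.Bijective f) :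
    FrameHom Y X where
  toFun := Function.surjInv hf.2
  map_inf' a b := hf.1 (by
    show f _ = f _
    rw [Function.surjInv_eq hf.2, map_inf, Function.surjInv_eq hf.2, Function.surjInv_eq hf.2])
  map_top' := hf.1 (by
    show f _ = f _
    rw [Function.surjInv_eq hf.2, map_top])
  map_sSup' s := hf.1 (by
    show f _ = f _
    rw [Function.surjInv_eq hf.2, map_sSup, ← Set.image_comp]
    congr 1
    rw [Set.image_congr (fun a _ => ?_), Set.image_id]
    exact Function.surjInv_eq hf.2 a)

@[simp] theorem FrameHom.inverse_apply_apply (f : FrameHom X Y) (hf : Function.Bijective f)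
    (x : X) : f.inverse hf (f x) = x := hf.1 (Function.surjInv_eq hf.2 (f x))

@[simp] theorem FrameHom.apply_inverse_apply (f : FrameHom X Y) (hf : Function.Bijective f)
    (y : Y) : f (f.inverse hf y) = y := Function.surjInv_eq hf.2 y

theorem FrameHom.inverse_comp (f : FrameHom X Y) (hf : Function.Bijective f) :
    (f.inverse hf).comp f = FrameHom.id X :=
  FrameHom.ext fun a => f.inverse_apply_apply hf a

theorem FrameHom.comp_inverse (f : FrameHom X Y) (hf : Function.Bijective f) :
    f.comp (f.inverse hf) = FrameHom.id Y :=
  FrameHom.ext fun a => f.apply_inverse_apply hf a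

theorem FrameHom.inverse_bijective (f : FrameHom X Y) (hf : Function.Bijective f) :
    Function.Bijective (f.inverse hf) :=
  ⟨fun a b h => by rw [← f.apply_inverse_apply hf a, h, f.apply_inverse_apply hf],
   fun x => ⟨f x, f.inverse_apply_apply hf x⟩⟩

end Infra2

section Gen
variable {X1 X2 X Y : Type} [Order.Frame X1] [Order.Frame X2] [Order.Frame X] [Order.Frame Y]

/-- The subframe generated by the images of two frame homs, as a subbasis. -/
def genSubframe (g1 : FrameHom X1 X) (g2 : FrameHom X2 X) : Subframe X := by
  refine ⟨{x | ∃ A : Set (X1 × X2), x = sSup ((fun p => g1 p.1 ⊓ g2 p.2) '' A)}, ?_, ?_, ?_⟩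
  · intro T hT
    have hT' : ∀ x, x ∈ T → ∃ A : Set (X1 × X2),
        x = sSup ((fun p => g1 p.1 ⊓ g2 p.2) '' A) := fun x hx => hT hx
    choose! A hA using hT'
    refine ⟨⋃ t : T, A ↑t, ?_⟩
    rw [Set.image_iUnion, sSup_iUnion, sSup_eq_iSup']
    exact iSup_congr fun t => hA (↑t) t.2
  · rintro x ⟨A, rfl⟩ y ⟨B, rfl⟩
    refine ⟨Set.image2 (fun p q => (p.1 ⊓ q.1, p.2 ⊓ q.2)) A B, le_antisymm ?_ ?_⟩
    · rw [sSup_inf_sSup]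
      refine iSup₂_le ?_
      rintro ⟨b, c⟩ ⟨⟨p, hp, rfl⟩, ⟨q, hq, rfl⟩⟩
      refine le_trans ?_ (le_sSup ⟨(p.1 ⊓ q.1, p.2 ⊓ q.2), ⟨p, hp, q, hq, rfl⟩, rfl⟩)
      simp only [map_inf]
      exact le_of_eq (by rw [inf_inf_inf_comm])
    · refine sSup_le ?_
      rintro c ⟨r, ⟨p, hp, q, hq, rfl⟩, rfl⟩
      refine le_inf (le_trans ?_ (le_sSup ⟨p, hp, rfl⟩)) (le_trans ?_ (le_sSup ⟨q, hq, rfl⟩))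
      · exact inf_le_inf ((map_inf g1 _ _).le.trans inf_le_left)
          ((map_inf g2 _ _).le.trans inf_le_left)
      · exact inf_le_inf ((map_inf g1 _ _).le.trans inf_le_right)
          ((map_inf g2 _ _).le.trans inf_le_right)
  · exact ⟨{(⊤, ⊤)}, by simp⟩

theorem mem_genSubframe (g1 : FrameHom X1 X) (g2 : FrameHom X2 X) (x : X) :
    x ∈ genSubframe g1 g2 ↔
      ∃ A : Set (X1 × X2), x = sSup ((fun p => g1 p.1 ⊓ g2 p.2) '' A) := Iff.rfl

theorem e1_mem_genSubframe (g1 : FrameHom X1 X) (g2 : FrameHom X2 X) (a : X1) :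
    g1 a ∈ genSubframe g1 g2 :=
  ⟨{(a, ⊤)}, by simp⟩

theorem e2_mem_genSubframe (g1 : FrameHom X1 X) (g2 : FrameHom X2 X) (b : X2) :
    g2 b ∈ genSubframe g1 g2 :=
  ⟨{(⊤, b)}, by simp⟩

end Gen

section Gadgets
variable {X Y : Type} [Order.Frame X] [Order.Frame Y]

/-- The unique frame hom `Prop → X`. -/
def chiHom (X : Type) [Order.Frame X] : FrameHom Prop X where
  toFun q := ⨆ (_ : q), ⊤
  map_inf' q r := by
    by_cases hq : q <;> by_cases hr : r <;>
      simp [hq, hr, inf_Prop_eq]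
  map_top' := le_antisymm le_top (le_iSup_of_le trivial le_rfl)
  map_sSup' s := by
    show ⨆ (_ : sSup s), (⊤ : X) = _
    rw [sSup_Prop_eq, sSup_image]
    refine le_antisymm (iSup_le fun h => ?_) ?_
    · obtain ⟨q, hq, hq'⟩ := h
      exact le_iSup₂_of_le q hq (le_iSup_of_le hq' le_rfl)
    · exact iSup₂_le fun q hq => iSup_le fun hq' => le_iSup_of_le ⟨q, hq, hq'⟩ le_rfl

@[simp] theorem chiHom_apply (q : Prop) : chiHom X q = ⨆ (_ : q), (⊤ : X) := rfl

theorem chiHom_natural (f : FrameHom X Y) (q : Prop) : f (chiHom X q) = chiHom Y q := by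
  by_cases hq : q <;> simp [hq]

theorem chiHom_injective_of_nontrivial (h : (⊥ : X) ≠ ⊤) : Function.Injective (chiHom X) := by
  intro q r hqr
  by_cases hq : q <;> by_cases hr : r <;> simp [hq, hr] at hqr ⊢
  · exact absurd hqr.symm h
  · exact absurd hqr h

/-- The three-element chain as a subframe of `Prop × Prop`. -/
def C3 : Subframe (Prop × Prop) := by
  refine ⟨{p | p.1 → p.2}, ?_, ?_, ?_⟩
  · intro T hT h1
    rw [Prod.fst_sSup, sSup_Prop_eq] at h1
    obtain ⟨q, ⟨t, ht, rfl⟩, hq⟩ := h1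
    rw [Prod.snd_sSup, sSup_Prop_eq]
    exact ⟨t.2, ⟨t, ht, rfl⟩, hT ht hq⟩
  · rintro a ha b hb ⟨h1, h2⟩
    exact ⟨ha h1, hb h2⟩
  · exact fun h => h

theorem C3_val_inf_1 (p q : C3) : (((p ⊓ q : C3) : Prop × Prop)).1 = ((p : Prop × Prop).1 ∧ (q : Prop × Prop).1) := by
  rw [Subframe.coe_inf]; rfl

theorem C3_val_inf_2 (p q : C3) : (((p ⊓ q : C3) : Prop × Prop)).2 = ((p : Prop × Prop).2 ∧ (q : Prop × Prop).2) := by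
  rw [Subframe.coe_inf]; rfl

theorem C3_val_sSup_1 (T : Set C3) :
    ((sSup T : C3) : Prop × Prop).1 = ∃ p ∈ T, ((p : C3) : Prop × Prop).1 := by
  rw [Subframe.coe_sSup, Prod.fst_sSup, sSup_Prop_eq]
  refine propext ⟨?_, ?_⟩
  · rintro ⟨q, ⟨x, ⟨p, hp, rfl⟩, rfl⟩, hq⟩
    exact ⟨p, hp, hq⟩
  · rintro ⟨p, hp, h⟩
    exact ⟨_, ⟨_, ⟨p, hp, rfl⟩, rfl⟩, h⟩

theorem C3_val_sSup_2 (T : Set C3) :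
    ((sSup T : C3) : Prop × Prop).2 = ∃ p ∈ T, ((p : C3) : Prop × Prop).2 := by
  rw [Subframe.coe_sSup, Prod.snd_sSup, sSup_Prop_eq]
  refine propext ⟨?_, ?_⟩
  · rintro ⟨q, ⟨x, ⟨p, hp, rfl⟩, rfl⟩, hq⟩
    exact ⟨p, hp, hq⟩
  · rintro ⟨p, hp, h⟩
    exact ⟨_, ⟨_, ⟨p, hp, rfl⟩, rfl⟩, h⟩

theorem C3_bot_ne_top : (⊥ : C3) ≠ ⊤ := by
  intro h
  have h1 : ((⊤ : C3) : Prop × Prop).1 := by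
    rw [Subframe.coe_top]; exact trivial
  rw [← h] at h1
  have : ((⊥ : C3) : Prop × Prop) = ⊥ := by
    have : (⊥ : C3) = sSup (∅ : Set C3) := by exact sSup_empty.symm
    rw [this, Subframe.coe_sSup]
    simp
  rw [this] at h1
  exact h1

/-- The frame hom from the 3-chain picking out `⊥ ≤ a ≤ ⊤`. -/
def phiHom (a : X) : FrameHom C3 X where
  toFun p := (⨆ (_ : ((p : C3) : Prop × Prop).1), (⊤ : X)) ⊔ ⨆ (_ : ((p : C3) : Prop × Prop).2), a
  map_inf' p q := by
    have hp : ((p : C3) : Prop × Prop).1 → ((p : C3) : Prop × Prop).2 := p.2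
    have hq : ((q : C3) : Prop × Prop).1 → ((q : C3) : Prop × Prop).2 := q.2
    by_cases hp1 : (p : Prop × Prop).1 <;> by_cases hq1 : (q : Prop × Prop).1 <;>
      by_cases hp2 : (p : Prop × Prop).2 <;> by_cases hq2 : (q : Prop × Prop).2 <;>
        simp_all [C3_val_inf_1, C3_val_inf_2]
  map_top' := by
    have h1 : ((⊤ : C3) : Prop × Prop).1 := by rw [Subframe.coe_top]; exact trivial
    have h2 : ((⊤ : C3) : Prop × Prop).2 := (⊤ : C3).2 h1
    show (⨆ (_ : ((⊤ : C3) : Prop × Prop).1), (⊤ : X)) ⊔ (⨆ (_ : ((⊤ : C3) : Prop × Prop).2), a) = ⊤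
    rw [iSup_pos h1, iSup_pos h2]
    exact top_sup_eq a
  map_sSup' T := by
    show (⨆ (_ : ((sSup T : C3) : Prop × Prop).1), (⊤ : X)) ⊔ (⨆ (_ : ((sSup T : C3) : Prop × Prop).2), a) = _
    rw [C3_val_sSup_1, C3_val_sSup_2, sSup_image]
    rw [show (∃ p ∈ T, ((p : C3) : Prop × Prop).1) = ∃ p, p ∈ T ∧ ((p : C3) : Prop × Prop).1
      from rfl]
    rw [show (∃ p ∈ T, ((p : C3) : Prop × Prop).2) = ∃ p, p ∈ T ∧ ((p : C3) : Prop × Prop).2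
      from rfl]
    rw [iSup_exists, iSup_exists]
    simp_rw [iSup_and]
    rw [← iSup_sup_eq]
    refine iSup_congr fun p => ?_
    rw [← iSup_sup_eq]

@[simp] theorem phiHom_apply (a : X) (p : C3) :
    phiHom a p =
      (⨆ (_ : ((p : C3) : Prop × Prop).1), (⊤ : X)) ⊔ ⨆ (_ : ((p : C3) : Prop × Prop).2), a := rfl

/-- The middle element of the three-chain. -/
def c3mid : C3 := ⟨(False, True), fun h => h.elim⟩

theorem phiHom_c3mid (a : X) : phiHom a c3mid = a := by
  simp [phiHom, c3mid]

theorem hom_phiHom (f : FrameHom X Y) (a : X) (p : C3) :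
    f (phiHom a p) = phiHom (f a) p := by
  by_cases h1 : ((p : C3) : Prop × Prop).1 <;> by_cases h2 : ((p : C3) : Prop × Prop).2 <;>
    simp [h1, h2]

theorem phiHom_chiHom (a : X) (q : Prop) : phiHom a (chiHom C3 q) = chiHom X q := by
  by_cases hq : q <;> simp [hq]

end Gadgets

section Coprod
variable {A B Q : Type} [Order.Frame A] [Order.Frame B] [Order.Frame Q]

/-- C-ideals: lower subsets of `A × B` closed under joins in each coordinate. -/
def IsCIdl (U : Set (A × B)) : Prop :=
  (∀ p q : A × B, p ≤ q → q ∈ U → p ∈ U) ∧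
  (∀ (S : Set A) (b : B), (∀ a ∈ S, (a, b) ∈ U) → (sSup S, b) ∈ U) ∧
  (∀ (a : A) (T : Set B), (∀ b ∈ T, (a, b) ∈ U) → (a, sSup T) ∈ U)

def CIdl (A B : Type) [Order.Frame A] [Order.Frame B] : Type :=
  {U : Set (A × B) // IsCIdl U}

namespace CIdl

instance : PartialOrder (CIdl A B) := Subtype.partialOrder _

theorem le_def {U V : CIdl A B} : U ≤ V ↔ U.val ⊆ V.val := Iff.rfl

theorem bot_pair_mem (U : CIdl A B) (a : A) : (a, ⊥) ∈ U.val := by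
  have := U.2.2.2 a ∅ (by simp)
  simpa using this

theorem pair_bot_mem (U : CIdl A B) (b : B) : ((⊥ : A), b) ∈ U.val := by
  have := U.2.2.1 ∅ b (by simp)
  simpa using this

instance : InfSet (CIdl A B) :=
  ⟨fun 𝒰 => ⟨{p | ∀ U ∈ 𝒰, p ∈ U.val}, by
    refine ⟨fun p q hpq hq U hU => U.2.1 p q hpq (hq U hU), fun S b h U hU => ?_,
      fun a T h U hU => ?_⟩
    · exact U.2.2.1 S b fun a ha => h a ha U hU
    · exact U.2.2.2 a T fun b hb => h b hb U hU⟩⟩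

theorem val_sInf (𝒰 : Set (CIdl A B)) : (sInf 𝒰).val = {p | ∀ U ∈ 𝒰, p ∈ U.val} := rfl

def completeLattice : CompleteLattice (CIdl A B) :=
  completeLatticeOfInf _ (fun 𝒰 => ⟨fun U hU p hp => hp U hU, fun W hW p hp U hU => hW hU hp⟩)

theorem val_inf_cl (U V : CIdl A B) :
    (@Min.min _ (@SemilatticeInf.toMin _ (@Lattice.toSemilatticeInf _
      (@CompleteLattice.toLattice _ CIdl.completeLattice))) U V).val = U.val ∩ V.val := by
  show (sInf {U, V}).val = _
  rw [val_sInf]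
  ext p
  constructor
  · intro h
    exact ⟨h U (Set.mem_insert _ _), h V (Set.mem_insert_of_mem _ rfl)⟩
  · rintro ⟨h1, h2⟩ W hW
    rcases hW with rfl | hW
    · exact h1
    · rcases hW with rfl
      exact h2

/-- Heyting-style implication of C-ideals. -/
def cImp (U Z : CIdl A B) : CIdl A B := by
  refine ⟨{p | ∀ q, q ≤ p → q ∈ U.val → q ∈ Z.val}, ?_, fun S b h => ?_, fun a T h => ?_⟩
  · exact fun p q hpq hq r hr hrU => hq r (hr.trans hpq) hrU
  · rintro ⟨x, y⟩ ⟨hx, hy⟩ hU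
    have key : ∀ a ∈ S, (x ⊓ a, y) ∈ Z.val := by
      intro a ha
      refine h a ha (x ⊓ a, y) ⟨inf_le_right, hy⟩ ?_
      exact U.2.1 _ _ ⟨inf_le_left, le_refl y⟩ hU
    have hZ := Z.2.2.1 ((x ⊓ ·) '' S) y (by rintro _ ⟨a, ha, rfl⟩; exact key a ha)
    have hsup : sSup ((x ⊓ ·) '' S) = x := by
      rw [sSup_image, ← inf_sSup_eq]
      exact inf_eq_left.2 hx
    rwa [hsup] at hZ
  · rintro ⟨x, y⟩ ⟨hx, hy⟩ hU
    have key : ∀ b ∈ T, (x, y ⊓ b) ∈ Z.val := by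
      intro b hb
      refine h b hb (x, y ⊓ b) ⟨hx, inf_le_right⟩ ?_
      exact U.2.1 _ _ ⟨le_refl x, inf_le_left⟩ hU
    have hZ := Z.2.2.2 x ((y ⊓ ·) '' T) (by rintro _ ⟨b, hb, rfl⟩; exact key b hb)
    have hsup : sSup ((y ⊓ ·) '' T) = y := by
      rw [sSup_image, ← inf_sSup_eq]
      exact inf_eq_left.2 hy
    rwa [hsup] at hZ

theorem le_cImp {U V Z : CIdl A B} (h : ∀ p, p ∈ U.val → p ∈ V.val → p ∈ Z.val) :
    V ≤ cImp U Z := fun p hp q hq hqU => h q hqU (V.2.1 q p hq hp)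

instance frame : Order.Frame (CIdl A B) := by
  letI := CIdl.completeLattice (A := A) (B := B)
  refine Order.Frame.ofMinimalAxioms ⟨?_⟩
  intro a s
  letI := CIdl.completeLattice (A := A) (B := B)
  have hb : ∀ b ∈ s, b ≤ cImp a (⨆ b ∈ s, a ⊓ b) := by
    intro b hbs
    refine le_cImp fun p hpa hpb => ?_
    have h1 : a ⊓ b ≤ ⨆ b ∈ s, a ⊓ b := le_iSup₂_of_le b hbs (le_refl _)
    refine le_def.1 h1 ?_
    rw [val_inf_cl]; exact ⟨hpa, hpb⟩
  have hs : sSup s ≤ cImp a (⨆ b ∈ s, a ⊓ b) := sSup_le hb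
  intro p hp
  have hp' : p ∈ (a ⊓ sSup s).val := hp
  rw [val_inf_cl] at hp'
  exact (le_def.1 hs hp'.2) p (le_refl p) hp'.1

@[simp] theorem val_inf (U V : CIdl A B) : (U ⊓ V).val = U.val ∩ V.val := val_inf_cl U V

@[simp] theorem val_top : (⊤ : CIdl A B).val = Set.univ := by
  have h : (⊤ : CIdl A B) = sInf ∅ := by exact sInf_empty.symm
  rw [h, val_sInf]; ext p; simp

def inj1Set (a : A) : CIdl A B := by
  refine ⟨{p | p.1 ≤ a ∨ p.2 = ⊥}, ?_, fun S b h => ?_, fun x T h => ?_⟩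
  · rintro p q hpq (hq | hq)
    · exact Or.inl (hpq.1.trans hq)
    · exact Or.inr (le_bot_iff.1 (hq ▸ hpq.2))
  · by_cases hb : b = ⊥
    · exact Or.inr hb
    · refine Or.inl (sSup_le fun x hx => ?_)
      rcases h x hx with h' | h'
      · exact h'
      · exact absurd h' hb
  · by_cases hx : x ≤ a
    · exact Or.inl hx
    · refine Or.inr (le_bot_iff.1 (sSup_le fun b hbT => ?_))
      rcases h b hbT with h' | h'
      · exact absurd h' hx
      · exact le_bot_iff.2 h'

theorem mem_inj1Set {a : A} {p : A × B} : p ∈ (inj1Set (B := B) a).val ↔ p.1 ≤ a ∨ p.2 = ⊥ :=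
  Iff.rfl

def inj2Set (b : B) : CIdl A B := by
  refine ⟨{p | p.2 ≤ b ∨ p.1 = ⊥}, ?_, fun S x h => ?_, fun x T h => ?_⟩
  · rintro p q hpq (hq | hq)
    · exact Or.inl (hpq.2.trans hq)
    · exact Or.inr (le_bot_iff.1 (hq ▸ hpq.1))
  · by_cases hx : x ≤ b
    · exact Or.inl hx
    · refine Or.inr (le_bot_iff.1 (sSup_le fun a haS => ?_))
      rcases h a haS with h' | h'
      · exact absurd h' hx
      · exact le_bot_iff.2 h'
  · by_cases hT : sSup T ≤ b
    · exact Or.inl hT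
    · by_cases hx : x = ⊥
      · exact Or.inr hx
      · refine Or.inl (sSup_le fun y hyT => ?_)
        rcases h y hyT with h' | h'
        · exact h'
        · exact absurd h' hx

theorem mem_inj2Set {b : B} {p : A × B} : p ∈ (inj2Set (A := A) b).val ↔ p.2 ≤ b ∨ p.1 = ⊥ :=
  Iff.rfl

/-- First coproduct injection as a frame hom. -/
def inj1 : FrameHom A (CIdl A B) where
  toFun := inj1Set
  map_inf' x y := by
    apply Subtype.ext
    rw [val_inf]
    ext p
    show p.1 ≤ x ⊓ y ∨ p.2 = ⊥ ↔ _
    simp only [le_inf_iff, Set.mem_inter_iff, mem_inj1Set]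
    constructor
    · rintro (⟨h1, h2⟩ | h)
      · exact ⟨Or.inl h1, Or.inl h2⟩
      · exact ⟨Or.inr h, Or.inr h⟩
    · rintro ⟨h1 | h1, h2 | h2⟩
      · exact Or.inl ⟨h1, h2⟩
      all_goals exact Or.inr (by assumption)
  map_top' := by
    apply Subtype.ext
    rw [val_top]
    ext p
    show p.1 ≤ ⊤ ∨ p.2 = ⊥ ↔ _
    simp
  map_sSup' S := by
    obtain ⟨W, hW⟩ : ∃ W : CIdl A B, sSup ((inj1Set (B := B)) '' S) = W := ⟨_, rfl⟩
    show inj1Set (sSup S) = sSup ((inj1Set (B := B)) '' S)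
    refine le_antisymm ?_ (sSup_le ?_)
    · rw [hW]
      intro p hp
      rcases (mem_inj1Set.1 hp) with hp1 | hp2
      · have key : ∀ a ∈ S, (p.1 ⊓ a, p.2) ∈ W.val := by
          intro a ha
          have hle : inj1Set (B := B) a ≤ W := hW ▸ le_sSup (Set.mem_image_of_mem _ ha)
          exact le_def.1 hle (mem_inj1Set.2 (Or.inl inf_le_right))
        have h2 := W.2.2.1 ((p.1 ⊓ ·) '' S) p.2 (by rintro _ ⟨a, ha, rfl⟩; exact key a ha)
        have hsup : sSup ((p.1 ⊓ ·) '' S) = p.1 := by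
          rw [sSup_image, ← inf_sSup_eq]
          exact inf_eq_left.2 hp1
        rw [hsup] at h2
        exact h2
      · exact W.2.1 p (p.1, ⊥) ⟨le_refl _, hp2 ▸ le_refl _⟩ (bot_pair_mem W p.1)
    · rintro V ⟨a, ha, rfl⟩
      intro p hp
      rcases mem_inj1Set.1 hp with h | h
      · exact mem_inj1Set.2 (Or.inl (h.trans (le_sSup ha)))
      · exact mem_inj1Set.2 (Or.inr h)

/-- Second coproduct injection as a frame hom. -/
def inj2 : FrameHom B (CIdl A B) where
  toFun := inj2Set
  map_inf' x y := by
    apply Subtype.ext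
    rw [val_inf]
    ext p
    show p.2 ≤ x ⊓ y ∨ p.1 = ⊥ ↔ _
    simp only [le_inf_iff, Set.mem_inter_iff, mem_inj2Set]
    constructor
    · rintro (⟨h1, h2⟩ | h)
      · exact ⟨Or.inl h1, Or.inl h2⟩
      · exact ⟨Or.inr h, Or.inr h⟩
    · rintro ⟨h1 | h1, h2 | h2⟩
      · exact Or.inl ⟨h1, h2⟩
      all_goals exact Or.inr (by assumption)
  map_top' := by
    apply Subtype.ext
    rw [val_top]
    ext p
    show p.2 ≤ ⊤ ∨ p.1 = ⊥ ↔ _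
    simp
  map_sSup' S := by
    obtain ⟨W, hW⟩ : ∃ W : CIdl A B, sSup ((inj2Set (A := A)) '' S) = W := ⟨_, rfl⟩
    show inj2Set (sSup S) = sSup ((inj2Set (A := A)) '' S)
    refine le_antisymm ?_ (sSup_le ?_)
    · rw [hW]
      intro p hp
      rcases (mem_inj2Set.1 hp) with hp1 | hp2
      · have key : ∀ b ∈ S, (p.1, p.2 ⊓ b) ∈ W.val := by
          intro b hb
          have hle : inj2Set (A := A) b ≤ W := hW ▸ le_sSup (Set.mem_image_of_mem _ hb)
          exact le_def.1 hle (mem_inj2Set.2 (Or.inl inf_le_right))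
        have h2 := W.2.2.2 p.1 ((p.2 ⊓ ·) '' S) (by rintro _ ⟨b, hb, rfl⟩; exact key b hb)
        have hsup : sSup ((p.2 ⊓ ·) '' S) = p.2 := by
          rw [sSup_image, ← inf_sSup_eq]
          exact inf_eq_left.2 hp1
        rw [hsup] at h2
        exact h2
      · exact W.2.1 p (⊥, p.2) ⟨hp2 ▸ le_refl _, le_refl _⟩ (pair_bot_mem W p.2)
    · rintro V ⟨b, hb, rfl⟩
      intro p hp
      rcases mem_inj2Set.1 hp with h | h
      · exact mem_inj2Set.2 (Or.inl (h.trans (le_sSup hb)))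
      · exact mem_inj2Set.2 (Or.inr h)

theorem inj1_apply (a : A) : (inj1 (B := B)) a = inj1Set a := rfl
theorem inj2_apply (b : B) : (inj2 (A := A)) b = inj2Set b := rfl

/-- Every C-ideal is the join of the "rectangles" it contains. -/
theorem eq_iSup_rect (U : CIdl A B) :
    U = ⨆ p ∈ U.val, (inj1 p.1 ⊓ inj2 p.2 : CIdl A B) := by
  refine le_antisymm ?_ (iSup₂_le fun p hp => ?_)
  · intro p hp
    have h1 : (inj1 p.1 ⊓ inj2 p.2 : CIdl A B) ≤ ⨆ p ∈ U.val, (inj1 p.1 ⊓ inj2 p.2 : CIdl A B) :=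
      le_iSup₂_of_le p hp (le_refl _)
    refine le_def.1 h1 ?_
    rw [val_inf]
    exact ⟨mem_inj1Set.2 (Or.inl (le_refl _)), mem_inj2Set.2 (Or.inl (le_refl _))⟩
  · intro q hq
    have hq' : q ∈ (inj1 p.1 ⊓ inj2 p.2 : CIdl A B).val := hq
    rw [val_inf] at hq'
    rcases mem_inj1Set.1 hq'.1 with h1 | h1
    · rcases mem_inj2Set.1 hq'.2 with h2 | h2
      · exact U.2.1 q p ⟨h1, h2⟩ hp
      · exact U.2.1 q (⊥, q.2) ⟨h2 ▸ le_refl _, le_refl _⟩ (pair_bot_mem U q.2)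
    · exact U.2.1 q (q.1, ⊥) ⟨le_refl _, h1 ▸ le_refl _⟩ (bot_pair_mem U q.1)

/-- The induced map out of the coproduct. -/
def desc (h1 : FrameHom A Q) (h2 : FrameHom B Q) : FrameHom (CIdl A B) Q where
  toFun U := ⨆ p ∈ U.val, h1 p.1 ⊓ h2 p.2
  map_inf' U V := by
    refine le_antisymm (le_inf ?_ ?_) ?_
    · refine iSup₂_le fun p hp => ?_
      rw [val_inf] at hp
      exact le_iSup₂_of_le p hp.1 (le_refl _)
    · refine iSup₂_le fun p hp => ?_
      rw [val_inf] at hp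
      exact le_iSup₂_of_le p hp.2 (le_refl _)
    · show (⨆ p ∈ U.val, h1 p.1 ⊓ h2 p.2) ⊓ (⨆ p ∈ V.val, h1 p.1 ⊓ h2 p.2) ≤ _
      rw [iSup_inf_eq]
      refine iSup_le fun p => ?_
      rw [iSup_inf_eq]
      refine iSup_le fun hp => ?_
      rw [inf_iSup_eq]
      refine iSup_le fun q => ?_
      rw [inf_iSup_eq]
      refine iSup_le fun hq => ?_
      have hmem : (p.1 ⊓ q.1, p.2 ⊓ q.2) ∈ (U ⊓ V).val := by
        rw [val_inf]
        exact ⟨U.2.1 _ p ⟨inf_le_left, inf_le_left⟩ hp, V.2.1 _ q ⟨inf_le_right, inf_le_right⟩ hq⟩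
      refine le_trans ?_ (le_iSup₂_of_le (p.1 ⊓ q.1, p.2 ⊓ q.2) hmem (le_refl _))
      simp only [map_inf]
      rw [inf_inf_inf_comm]
  map_top' := by
    refine le_antisymm le_top ?_
    have hmem : ((⊤ : A), (⊤ : B)) ∈ (⊤ : CIdl A B).val := by rw [val_top]; trivial
    refine le_trans ?_ (le_iSup₂_of_le (⊤, ⊤) hmem (le_refl _))
    simp
  map_sSup' 𝒰 := by
    rw [sSup_image]
    show (⨆ p ∈ (sSup 𝒰).val, h1 p.1 ⊓ h2 p.2) = ⨆ U ∈ 𝒰, ⨆ p ∈ U.val, h1 p.1 ⊓ h2 p.2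
    refine le_antisymm ?_ ?_
    · have hWc : IsCIdl {p : A × B |
          h1 p.1 ⊓ h2 p.2 ≤ ⨆ U ∈ 𝒰, ⨆ p ∈ U.val, h1 p.1 ⊓ h2 p.2} := by
        refine ⟨?_, ?_, ?_⟩
        · intro p q hpq hq
          exact le_trans (inf_le_inf (OrderHomClass.mono h1 hpq.1)
            (OrderHomClass.mono h2 hpq.2)) hq
        · intro S b h
          show h1 (sSup S) ⊓ h2 b ≤ _
          rw [map_sSup, sSup_image, iSup_inf_eq]
          refine iSup_le fun a => ?_
          rw [iSup_inf_eq]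
          exact iSup_le fun ha => h a ha
        · intro a T h
          show h1 a ⊓ h2 (sSup T) ≤ _
          rw [map_sSup, sSup_image, inf_iSup_eq]
          refine iSup_le fun b => ?_
          rw [inf_iSup_eq]
          exact iSup_le fun hb => h b hb
      have hUW : ∀ U ∈ 𝒰, U ≤ (⟨_, hWc⟩ : CIdl A B) := fun U hU p hp =>
        le_iSup₂_of_le U hU (le_iSup₂_of_le p hp (le_refl _))
      have hsW : sSup 𝒰 ≤ (⟨_, hWc⟩ : CIdl A B) := sSup_le hUW
      exact iSup₂_le fun p hp => le_def.1 hsW hp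
    · refine iSup₂_le fun U hU => ?_
      refine iSup₂_le fun p hp => ?_
      exact le_iSup₂_of_le p (le_def.1 (le_sSup hU) hp) (le_refl _)

theorem desc_comp_inj1 (h1 : FrameHom A Q) (h2 : FrameHom B Q) :
    (desc h1 h2).comp inj1 = h1 := by
  refine FrameHom.ext fun a => ?_
  show ⨆ p ∈ (inj1Set (B := B) a).val, h1 p.1 ⊓ h2 p.2 = h1 a
  refine le_antisymm (iSup₂_le fun p hp => ?_) ?_
  · rcases mem_inj1Set.1 hp with h | h
    · exact le_trans inf_le_left (OrderHomClass.mono h1 h)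
    · rw [h, map_bot]
      simp
  · have hmem : ((a, ⊤) : A × B) ∈ (inj1Set (B := B) a).val :=
      mem_inj1Set.2 (Or.inl (le_refl a))
    refine le_trans ?_ (le_iSup₂_of_le (a, ⊤) hmem (le_refl _))
    simp

theorem desc_comp_inj2 (h1 : FrameHom A Q) (h2 : FrameHom B Q) :
    (desc h1 h2).comp inj2 = h2 := by
  refine FrameHom.ext fun b => ?_
  show ⨆ p ∈ (inj2Set (A := A) b).val, h1 p.1 ⊓ h2 p.2 = h2 b
  refine le_antisymm (iSup₂_le fun p hp => ?_) ?_
  · rcases mem_inj2Set.1 hp with h | h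
    · exact le_trans inf_le_right (OrderHomClass.mono h2 h)
    · rw [h, map_bot]
      simp
  · have hmem : ((⊤, b) : A × B) ∈ (inj2Set (A := A) b).val :=
      mem_inj2Set.2 (Or.inl (le_refl b))
    refine le_trans ?_ (le_iSup₂_of_le (⊤, b) hmem (le_refl _))
    simp

theorem desc_unique (h1 : FrameHom A Q) (h2 : FrameHom B Q) (k : FrameHom (CIdl A B) Q)
    (hk1 : k.comp inj1 = h1) (hk2 : k.comp inj2 = h2) : k = desc h1 h2 := by
  refine FrameHom.ext fun U => ?_
  conv_lhs => rw [eq_iSup_rect U]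
  rw [map_iSup₂]
  show ⨆ p ∈ U.val, k (inj1 p.1 ⊓ inj2 p.2) = ⨆ p ∈ U.val, h1 p.1 ⊓ h2 p.2
  refine iSup_congr fun p => iSup_congr fun hp => ?_
  rw [map_inf]
  congr 1
  · exact DFunLike.congr_fun hk1 p.1
  · exact DFunLike.congr_fun hk2 p.2

end CIdl
end Coprod

section BiframeLemmas

theorem BiframeHom.ext_h12 {L M : Biframe} {g g' : BiframeHom L M}
    (h1 : g.h1 = g'.h1) (h2 : g.h2 = g'.h2) : g = g' := by
  have h0 : g.h0 = g'.h0 := by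
    refine FrameHom.ext fun x => ?_
    obtain ⟨A, rfl⟩ := L.gen x
    rw [map_sSup, map_sSup, ← Set.image_comp, ← Set.image_comp]
    congr 1
    refine Set.image_congr fun p _ => ?_
    show g.h0 _ = g'.h0 _
    have c1 : g.h0 (L.e1 p.1) = M.e1 (g.h1 p.1) := DFunLike.congr_fun g.comm1 p.1
    have c2 : g.h0 (L.e2 p.2) = M.e2 (g.h2 p.2) := DFunLike.congr_fun g.comm2 p.2
    have c1' : g'.h0 (L.e1 p.1) = M.e1 (g'.h1 p.1) := DFunLike.congr_fun g'.comm1 p.1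
    have c2' : g'.h0 (L.e2 p.2) = M.e2 (g'.h2 p.2) := DFunLike.congr_fun g'.comm2 p.2
    rw [map_inf, map_inf, c1, c2, c1', c2', h1, h2]
  exact BiframeHom.ext h0 h1 h2

theorem BiframeHom.h0_e1 {L M : Biframe} (g : BiframeHom L M) (a : L.L1) :
    g.h0 (L.e1 a) = M.e1 (g.h1 a) := DFunLike.congr_fun g.comm1 a

theorem BiframeHom.h0_e2 {L M : Biframe} (g : BiframeHom L M) (b : L.L2) :
    g.h0 (L.e2 b) = M.e2 (g.h2 b) := DFunLike.congr_fun g.comm2 b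

/-- If both component maps are surjective, so is the ambient map. -/
theorem BiframeHom.h0_surjective {L M : Biframe} (f : BiframeHom L M)
    (s1 : Function.Surjective f.h1) (s2 : Function.Surjective f.h2) :
    Function.Surjective f.h0 := by
  intro m
  obtain ⟨A, rfl⟩ := M.gen m
  refine ⟨sSup ((fun q => L.e1 q.1 ⊓ L.e2 q.2) ''
    ((fun p => (Function.surjInv s1 p.1, Function.surjInv s2 p.2)) '' A)), ?_⟩
  rw [map_sSup, ← Set.image_comp, ← Set.image_comp]
  congr 1
  refine Set.image_congr fun p _ => ?_
  show f.h0 _ = _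
  rw [map_inf, f.h0_e1, f.h0_e2, Function.surjInv_eq s1, Function.surjInv_eq s2]

/-- Injectivity of the two component maps implies monomorphy. -/
theorem BiframeHom.isMono_of_injective {L M : Biframe} (m : BiframeHom L M)
    (i1 : Function.Injective m.h1) (i2 : Function.Injective m.h2) : m.IsMono := by
  intro N g g' h
  have e1 : m.h1.comp g.h1 = m.h1.comp g'.h1 := congrArg BiframeHom.h1 h
  have e2 : m.h2.comp g.h2 = m.h2.comp g'.h2 := congrArg BiframeHom.h2 h
  refine BiframeHom.ext_h12 ?_ ?_
  · exact FrameHom.ext fun a => i1 (DFunLike.congr_fun e1 a)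
  · exact FrameHom.ext fun b => i2 (DFunLike.congr_fun e2 b)

/-- Surjectivity of the component maps implies epimorphy. -/
theorem BiframeHom.isEpi_of_surjective {L M : Biframe} (f : BiframeHom L M)
    (s1 : Function.Surjective f.h1) (s2 : Function.Surjective f.h2) : f.IsEpi := by
  intro N g g' h
  have e1 : g.h1.comp f.h1 = g'.h1.comp f.h1 := congrArg BiframeHom.h1 h
  have e2 : g.h2.comp f.h2 = g'.h2.comp f.h2 := congrArg BiframeHom.h2 h
  refine BiframeHom.ext_h12 ?_ ?_
  · refine FrameHom.ext fun a => ?_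
    obtain ⟨a', rfl⟩ := s1 a
    exact DFunLike.congr_fun e1 a'
  · refine FrameHom.ext fun b => ?_
    obtain ⟨b', rfl⟩ := s2 b
    exact DFunLike.congr_fun e2 b'

/-- The test biframe on the three-element chain (in the first coordinate). -/
def testBiframe1 : Biframe where
  L0 := C3
  L1 := C3
  L2 := Prop
  e1 := FrameHom.id C3
  e2 := chiHom C3
  inj1 := fun _ _ h => h
  inj2 := chiHom_injective_of_nontrivial C3_bot_ne_top
  gen := fun x => by
    refine ⟨{(x, ⊤)}, ?_⟩
    rw [Set.image_singleton, sSup_singleton]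
    show x = FrameHom.id C3 x ⊓ chiHom C3 ⊤
    rw [map_top]
    simp

/-- The test biframe on the three-element chain (in the second coordinate). -/
def testBiframe2 : Biframe where
  L0 := C3
  L1 := Prop
  L2 := C3
  e1 := chiHom C3
  e2 := FrameHom.id C3
  inj1 := chiHom_injective_of_nontrivial C3_bot_ne_top
  inj2 := fun _ _ h => h
  gen := fun x => by
    refine ⟨{(⊤, x)}, ?_⟩
    rw [Set.image_singleton, sSup_singleton]
    show x = chiHom C3 ⊤ ⊓ FrameHom.id C3 x
    rw [map_top]
    simp

/-- Monomorphisms have injective first component. -/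
theorem BiframeHom.injective_h1_of_isMono {N M : Biframe} (m : BiframeHom N M)
    (hm : m.IsMono) : Function.Injective m.h1 := by
  intro a b hab
  let ga : BiframeHom testBiframe1 N :=
    { h0 := N.e1.comp (phiHom a)
      h1 := phiHom a
      h2 := chiHom N.L2
      comm1 := FrameHom.ext fun p => rfl
      comm2 := FrameHom.ext fun (q : Prop) => by
        show N.e1 (phiHom a (chiHom C3 q)) = N.e2 (chiHom N.L2 q)
        rw [phiHom_chiHom, chiHom_natural, chiHom_natural] }
  let gb : BiframeHom testBiframe1 N :=
    { h0 := N.e1.comp (phiHom b)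
      h1 := phiHom b
      h2 := chiHom N.L2
      comm1 := FrameHom.ext fun p => rfl
      comm2 := FrameHom.ext fun (q : Prop) => by
        show N.e1 (phiHom b (chiHom C3 q)) = N.e2 (chiHom N.L2 q)
        rw [phiHom_chiHom, chiHom_natural, chiHom_natural] }
  have hcomp : m.comp ga = m.comp gb := by
    refine BiframeHom.ext_h12 ?_ rfl
    refine FrameHom.ext fun (p : C3) => ?_
    show m.h1 (phiHom a p) = m.h1 (phiHom b p)
    rw [hom_phiHom, hom_phiHom, hab]
  have := hm _ ga gb hcomp
  have h1eq : phiHom a = phiHom (X := N.L1) b := congrArg BiframeHom.h1 this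
  have := DFunLike.congr_fun h1eq c3mid
  rwa [phiHom_c3mid, phiHom_c3mid] at this

/-- Monomorphisms have injective second component. -/
theorem BiframeHom.injective_h2_of_isMono {N M : Biframe} (m : BiframeHom N M)
    (hm : m.IsMono) : Function.Injective m.h2 := by
  intro a b hab
  let ga : BiframeHom testBiframe2 N :=
    { h0 := N.e2.comp (phiHom a)
      h1 := chiHom N.L1
      h2 := phiHom a
      comm1 := FrameHom.ext fun (q : Prop) => by
        show N.e2 (phiHom a (chiHom C3 q)) = N.e1 (chiHom N.L1 q)
        rw [phiHom_chiHom, chiHom_natural, chiHom_natural]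
      comm2 := FrameHom.ext fun p => rfl }
  let gb : BiframeHom testBiframe2 N :=
    { h0 := N.e2.comp (phiHom b)
      h1 := chiHom N.L1
      h2 := phiHom b
      comm1 := FrameHom.ext fun (q : Prop) => by
        show N.e2 (phiHom b (chiHom C3 q)) = N.e1 (chiHom N.L1 q)
        rw [phiHom_chiHom, chiHom_natural, chiHom_natural]
      comm2 := FrameHom.ext fun p => rfl }
  have hcomp : m.comp ga = m.comp gb := by
    refine BiframeHom.ext_h12 rfl ?_
    refine FrameHom.ext fun (p : C3) => ?_
    show m.h2 (phiHom a p) = m.h2 (phiHom b p)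
    rw [hom_phiHom, hom_phiHom, hab]
  have := hm _ ga gb hcomp
  have h2eq : phiHom a = phiHom (X := N.L2) b := congrArg BiframeHom.h2 this
  have := DFunLike.congr_fun h2eq c3mid
  rwa [phiHom_c3mid, phiHom_c3mid] at this

end BiframeLemmas

section Factorizations

/-- Frame homs out of the ambient frame of a biframe agreeing on the subbasis agree. -/
theorem Biframe.frameHom_ext {M : Biframe} {Q : Type} [Order.Frame Q]
    {k k' : FrameHom M.L0 Q} (h1 : ∀ a, k (M.e1 a) = k' (M.e1 a))
    (h2 : ∀ b, k (M.e2 b) = k' (M.e2 b)) : k = k' := by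
  refine FrameHom.ext fun x => ?_
  obtain ⟨A, rfl⟩ := M.gen x
  rw [map_sSup, map_sSup, ← Set.image_comp, ← Set.image_comp]
  congr 1
  refine Set.image_congr fun p _ => ?_
  show k _ = k' _
  rw [map_inf, map_inf, h1, h2]

variable {L M : Biframe} (f : BiframeHom L M)

/-! ### The image factorization of a biframe homomorphism -/

def BiframeHom.imSub : Subframe M.L0 :=
  genSubframe (M.e1.comp f.h1.rangeSubframe.incl) (M.e2.comp f.h2.rangeSubframe.incl)

def BiframeHom.im : Biframe where
  L0 := f.imSub
  L1 := f.h1.rangeSubframe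
  L2 := f.h2.rangeSubframe
  e1 := f.imSub.corestrict (M.e1.comp f.h1.rangeSubframe.incl)
    (fun a => e1_mem_genSubframe _ _ a)
  e2 := f.imSub.corestrict (M.e2.comp f.h2.rangeSubframe.incl)
    (fun b => e2_mem_genSubframe _ _ b)
  inj1 := f.imSub.corestrict_injective _ _
    (fun a b hab => f.h1.rangeSubframe.incl_injective (M.inj1 hab))
  inj2 := f.imSub.corestrict_injective _ _
    (fun a b hab => f.h2.rangeSubframe.incl_injective (M.inj2 hab))
  gen := fun x => by
    obtain ⟨A, hA⟩ := x.2
    refine ⟨A, Subtype.ext ?_⟩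
    erw [hA, Subframe.coe_sSup, ← Set.image_comp]
    congr 1
    refine Set.image_congr fun p _ => ?_
    show _ = ((_ ⊓ _ : f.imSub) : M.L0)
    rw [Subframe.coe_inf]
    rfl

def BiframeHom.imIncl : BiframeHom f.im M where
  h0 := f.imSub.incl
  h1 := f.h1.rangeSubframe.incl
  h2 := f.h2.rangeSubframe.incl
  comm1 := FrameHom.ext fun a => rfl
  comm2 := FrameHom.ext fun b => rfl

theorem BiframeHom.h0_mem_imSub (x : L.L0) : f.h0 x ∈ f.imSub := by
  obtain ⟨A, rfl⟩ := L.gen x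
  refine ⟨(fun p => (f.h1.rangeSubframe.corestrict f.h1 f.h1.mem_rangeSubframe p.1,
    f.h2.rangeSubframe.corestrict f.h2 f.h2.mem_rangeSubframe p.2)) '' A, ?_⟩
  rw [map_sSup, ← Set.image_comp, ← Set.image_comp]
  congr 1
  refine Set.image_congr fun p _ => ?_
  show f.h0 _ = _
  rw [map_inf, f.h0_e1, f.h0_e2]
  rfl

def BiframeHom.imRes : BiframeHom L f.im where
  h0 := f.imSub.corestrict f.h0 f.h0_mem_imSub
  h1 := f.h1.rangeSubframe.corestrict f.h1 f.h1.mem_rangeSubframe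
  h2 := f.h2.rangeSubframe.corestrict f.h2 f.h2.mem_rangeSubframe
  comm1 := FrameHom.ext fun a => Subtype.ext (f.h0_e1 a)
  comm2 := FrameHom.ext fun b => Subtype.ext (f.h0_e2 b)

theorem BiframeHom.imIncl_comp_imRes : f.imIncl.comp f.imRes = f :=
  BiframeHom.ext (FrameHom.ext fun _ => rfl) (FrameHom.ext fun _ => rfl)
    (FrameHom.ext fun _ => rfl)

/-- An extremal epi has surjective components. -/
theorem BiframeHom.surjective_of_extremal (hf : f.IsExtremalEpi) :
    Function.Surjective f.h1 ∧ Function.Surjective f.h2 := by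
  have hmono : f.imIncl.IsMono :=
    f.imIncl.isMono_of_injective f.h1.rangeSubframe.incl_injective
      f.h2.rangeSubframe.incl_injective
  obtain ⟨g, hg1, hg2⟩ := hf.2 f.im f.imRes f.imIncl hmono (f.imIncl_comp_imRes).symm
  constructor
  · intro b
    have : f.imIncl.h1 (g.h1 b) = b := by
      have := congrArg BiframeHom.h1 hg2
      exact DFunLike.congr_fun this b
    obtain ⟨a, ha⟩ := (g.h1 b).2
    exact ⟨a, by rw [ha]; exact this⟩
  · intro b
    have : f.imIncl.h2 (g.h2 b) = b := by
      have := congrArg BiframeHom.h2 hg2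
      exact DFunLike.congr_fun this b
    obtain ⟨a, ha⟩ := (g.h2 b).2
    exact ⟨a, by rw [ha]; exact this⟩

/-! ### The pushout factorization -/

variable {Q : Type} [Order.Frame Q] (w1 : FrameHom M.L1 Q) (w2 : FrameHom M.L2 Q)
  (v : FrameHom L.L0 Q)

def pushSub : Subframe (M.L0 × Q) := genSubframe (M.e1.prodMk w1) (M.e2.prodMk w2)

def pushBiframe : Biframe where
  L0 := pushSub (M := M) w1 w2
  L1 := M.L1
  L2 := M.L2
  e1 := (pushSub w1 w2).corestrict (M.e1.prodMk w1) (fun a => e1_mem_genSubframe _ _ a)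
  e2 := (pushSub w1 w2).corestrict (M.e2.prodMk w2) (fun b => e2_mem_genSubframe _ _ b)
  inj1 := (pushSub w1 w2).corestrict_injective _ _
    (fun a b hab => M.inj1 (congrArg Prod.fst hab))
  inj2 := (pushSub w1 w2).corestrict_injective _ _
    (fun a b hab => M.inj2 (congrArg Prod.fst hab))
  gen := fun x => by
    obtain ⟨A, hA⟩ := x.2
    refine ⟨A, Subtype.ext ?_⟩
    erw [hA, Subframe.coe_sSup, ← Set.image_comp]
    congr 1
    refine Set.image_congr fun p _ => ?_
    show _ = ((_ ⊓ _ : pushSub w1 w2) : M.L0 × Q)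
    rw [Subframe.coe_inf]
    rfl

theorem mem_pushSub (hv1 : ∀ a, v (L.e1 a) = w1 (f.h1 a))
    (hv2 : ∀ b, v (L.e2 b) = w2 (f.h2 b)) (x : L.L0) :
    (f.h0.prodMk v) x ∈ pushSub w1 w2 := by
  obtain ⟨A, rfl⟩ := L.gen x
  refine ⟨(fun p => (f.h1 p.1, f.h2 p.2)) '' A, ?_⟩
  rw [map_sSup, ← Set.image_comp, ← Set.image_comp]
  congr 1
  refine Set.image_congr fun p _ => ?_
  show (f.h0.prodMk v) _ = (M.e1.prodMk w1) (f.h1 p.1) ⊓ (M.e2.prodMk w2) (f.h2 p.2)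
  rw [map_inf]
  refine congrArg₂ _ ?_ ?_ <;> refine Prod.ext ?_ ?_
  · exact f.h0_e1 p.1
  · exact hv1 p.1
  · exact f.h0_e2 p.2
  · exact hv2 p.2

def pushRes (hv1 : ∀ a, v (L.e1 a) = w1 (f.h1 a)) (hv2 : ∀ b, v (L.e2 b) = w2 (f.h2 b)) :
    BiframeHom L (pushBiframe (M := M) w1 w2) where
  h0 := (pushSub w1 w2).corestrict (f.h0.prodMk v) (mem_pushSub f w1 w2 v hv1 hv2)
  h1 := f.h1
  h2 := f.h2
  comm1 := FrameHom.ext fun a => Subtype.ext (Prod.ext (f.h0_e1 a) (hv1 a))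
  comm2 := FrameHom.ext fun b => Subtype.ext (Prod.ext (f.h0_e2 b) (hv2 b))

def pushIncl : BiframeHom (pushBiframe (M := M) w1 w2) M where
  h0 := (FrameHom.fst (Y := M.L0) (Z := Q)).comp (pushSub w1 w2).incl
  h1 := FrameHom.id _
  h2 := FrameHom.id _
  comm1 := FrameHom.ext fun a => rfl
  comm2 := FrameHom.ext fun b => rfl

theorem pushIncl_comp_pushRes (hv1 : ∀ a, v (L.e1 a) = w1 (f.h1 a))
    (hv2 : ∀ b, v (L.e2 b) = w2 (f.h2 b)) :
    (pushIncl w1 w2).comp (pushRes f w1 w2 v hv1 hv2) = f :=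
  BiframeHom.ext (FrameHom.ext fun _ => rfl) (FrameHom.ext fun _ => rfl)
    (FrameHom.ext fun _ => rfl)

end Factorizations

section Main

theorem CIdl.isCoprod {A B : Type} [Order.Frame A] [Order.Frame B] :
    IsCoprod (CIdl.inj1 : FrameHom A (CIdl A B)) CIdl.inj2 := fun Q _ h1 h2 =>
  ⟨CIdl.desc h1 h2, ⟨CIdl.desc_comp_inj1 h1 h2, CIdl.desc_comp_inj2 h1 h2⟩,
    fun k hk => CIdl.desc_unique h1 h2 k hk.1 hk.2⟩

variable {L M : Biframe} (f : BiframeHom L M)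

theorem BiframeHom.isCanonicalPushout_of_extremal (hf : f.IsExtremalEpi) :
    f.IsCanonicalPushout := by
  intro K _ i1 i2 hK qL hqL1 hqL2 K' _ j1 j2 hK' qM hqM1 hqM2 F hF1 hF2
  constructor
  · obtain ⟨k0, hk0, huniq⟩ := hK M.L0 (M.e1.comp f.h1) (M.e2.comp f.h2)
    have h1 : (qM.comp F).comp i1 = M.e1.comp f.h1 := by
      rw [FrameHom.comp_assoc, hF1, ← FrameHom.comp_assoc, hqM1]
    have h2 : (qM.comp F).comp i2 = M.e2.comp f.h2 := by
      rw [FrameHom.comp_assoc, hF2, ← FrameHom.comp_assoc, hqM2]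
    have h1' : (f.h0.comp qL).comp i1 = M.e1.comp f.h1 := by
      rw [FrameHom.comp_assoc, hqL1, f.comm1]
    have h2' : (f.h0.comp qL).comp i2 = M.e2.comp f.h2 := by
      rw [FrameHom.comp_assoc, hqL2, f.comm2]
    rw [huniq _ ⟨h1, h2⟩, huniq _ ⟨h1', h2'⟩]
  · intro Q _ u v huv
    have hv1 : ∀ a, v (L.e1 a) = (u.comp j1) (f.h1 a) := by
      intro a
      have e1 : qL (i1 a) = L.e1 a := DFunLike.congr_fun hqL1 a
      have e2 : F (i1 a) = j1 (f.h1 a) := DFunLike.congr_fun hF1 a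
      have e3 : u (F (i1 a)) = v (qL (i1 a)) := DFunLike.congr_fun huv (i1 a)
      rw [← e1, ← e3, e2]
      rfl
    have hv2 : ∀ b, v (L.e2 b) = (u.comp j2) (f.h2 b) := by
      intro b
      have e1 : qL (i2 b) = L.e2 b := DFunLike.congr_fun hqL2 b
      have e2 : F (i2 b) = j2 (f.h2 b) := DFunLike.congr_fun hF2 b
      have e3 : u (F (i2 b)) = v (qL (i2 b)) := DFunLike.congr_fun huv (i2 b)
      rw [← e1, ← e3, e2]
      rfl
    have hmono : (pushIncl (M := M) (u.comp j1) (u.comp j2)).IsMono :=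
      BiframeHom.isMono_of_injective _ (fun a b hab => hab) (fun a b hab => hab)
    obtain ⟨g, hg1, hg2⟩ := hf.2 _ (pushRes f (u.comp j1) (u.comp j2) v hv1 hv2)
      (pushIncl (u.comp j1) (u.comp j2)) hmono
      (pushIncl_comp_pushRes f (u.comp j1) (u.comp j2) v hv1 hv2).symm
    set k : FrameHom M.L0 Q :=
      ((FrameHom.snd).comp (pushSub (M := M) (u.comp j1) (u.comp j2)).incl).comp g.h0 with hk
    have hg2h1 : g.h1 = FrameHom.id M.L1 := by
      have hcmp : (FrameHom.id M.L1).comp g.h1 = FrameHom.id M.L1 :=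
        congrArg BiframeHom.h1 hg2
      exact (FrameHom.id_comp _).symm.trans hcmp
    have hkM1 : ∀ b, k (M.e1 b) = u (j1 b) := by
      intro b
      have hc : g.h0 (M.e1 b) =
          (pushBiframe (M := M) (u.comp j1) (u.comp j2)).e1 (g.h1 b) := g.h0_e1 b
      rw [hg2h1] at hc
      show ((FrameHom.snd).comp (pushSub (M := M) (u.comp j1) (u.comp j2)).incl)
        (g.h0 (M.e1 b)) = u (j1 b)
      rw [hc]
      rfl
    have hg2h2 : g.h2 = FrameHom.id M.L2 := by
      have hcmp : (FrameHom.id M.L2).comp g.h2 = FrameHom.id M.L2 :=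
        congrArg BiframeHom.h2 hg2
      exact (FrameHom.id_comp _).symm.trans hcmp
    have hkM2 : ∀ b, k (M.e2 b) = u (j2 b) := by
      intro b
      have hc : g.h0 (M.e2 b) =
          (pushBiframe (M := M) (u.comp j1) (u.comp j2)).e2 (g.h2 b) := g.h0_e2 b
      rw [hg2h2] at hc
      show ((FrameHom.snd).comp (pushSub (M := M) (u.comp j1) (u.comp j2)).incl)
        (g.h0 (M.e2 b)) = u (j2 b)
      rw [hc]
      rfl
    have hkv : k.comp f.h0 = v := by
      have hid : g.h0.comp ((pushIncl (M := M) (u.comp j1) (u.comp j2)).h0) =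
          FrameHom.id _ := congrArg BiframeHom.h0 hg1
      have hfac : f.h0 = ((pushIncl (M := M) (u.comp j1) (u.comp j2)).h0).comp
          ((pushRes f (u.comp j1) (u.comp j2) v hv1 hv2).h0) :=
        (congrArg BiframeHom.h0 (pushIncl_comp_pushRes f (u.comp j1) (u.comp j2) v hv1 hv2)).symm
      refine FrameHom.ext fun x => ?_
      show ((FrameHom.snd).comp (pushSub (M := M) (u.comp j1) (u.comp j2)).incl)
        (g.h0 (f.h0 x)) = v x
      have : g.h0 (f.h0 x) = (pushRes f (u.comp j1) (u.comp j2) v hv1 hv2).h0 x := by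
        rw [hfac]
        exact DFunLike.congr_fun hid _
      rw [this]
      rfl
    have hku : k.comp qM = u := by
      obtain ⟨k0, hk0, huniq⟩ := hK' Q (u.comp j1) (u.comp j2)
      have c1 : (k.comp qM).comp j1 = u.comp j1 := by
        rw [FrameHom.comp_assoc, hqM1]
        exact FrameHom.ext hkM1
      have c2 : (k.comp qM).comp j2 = u.comp j2 := by
        rw [FrameHom.comp_assoc, hqM2]
        exact FrameHom.ext hkM2
      rw [huniq _ ⟨c1, c2⟩, huniq u ⟨rfl, rfl⟩]
    refine ⟨k, ⟨hku, hkv⟩, ?_⟩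
    rintro y ⟨hy1, hy2⟩
    refine Biframe.frameHom_ext (fun a => ?_) (fun b => ?_)
    · have e1 : qM (j1 a) = M.e1 a := DFunLike.congr_fun hqM1 a
      rw [← e1]
      have : y (qM (j1 a)) = u (j1 a) := by rw [← hy1]; rfl
      rw [this]
      have : k (qM (j1 a)) = u (j1 a) := by rw [← hku]; rfl
      rw [this]
    · have e2 : qM (j2 b) = M.e2 b := DFunLike.congr_fun hqM2 b
      rw [← e2]
      have : y (qM (j2 b)) = u (j2 b) := by rw [← hy1]; rfl
      rw [this]
      have : k (qM (j2 b)) = u (j2 b) := by rw [← hku]; rfl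
      rw [this]

theorem BiframeHom.extremal_of_surj_pushout (s1 : Function.Surjective f.h1)
    (s2 : Function.Surjective f.h2) (hpo : f.IsCanonicalPushout) : f.IsExtremalEpi := by
  refine ⟨f.isEpi_of_surjective s1 s2, ?_⟩
  intro N h m hm hfac
  have i1inj := m.injective_h1_of_isMono hm
  have i2inj := m.injective_h2_of_isMono hm
  have hfac1 : f.h1 = m.h1.comp h.h1 := congrArg BiframeHom.h1 hfac
  have hfac2 : f.h2 = m.h2.comp h.h2 := congrArg BiframeHom.h2 hfac
  have hfac0 : f.h0 = m.h0.comp h.h0 := congrArg BiframeHom.h0 hfac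
  have ms1 : Function.Surjective m.h1 := by
    intro b
    obtain ⟨a, ha⟩ := s1 b
    rw [hfac1] at ha
    exact ⟨h.h1 a, ha⟩
  have ms2 : Function.Surjective m.h2 := by
    intro b
    obtain ⟨a, ha⟩ := s2 b
    rw [hfac2] at ha
    exact ⟨h.h2 a, ha⟩
  have bij1 : Function.Bijective m.h1 := ⟨i1inj, ms1⟩
  have bij2 : Function.Bijective m.h2 := ⟨i2inj, ms2⟩
  have hs1 : Function.Surjective h.h1 := by
    intro n
    obtain ⟨a, ha⟩ := s1 (m.h1 n)
    rw [hfac1] at ha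
    exact ⟨a, i1inj ha⟩
  have hs2 : Function.Surjective h.h2 := by
    intro n
    obtain ⟨a, ha⟩ := s2 (m.h2 n)
    rw [hfac2] at ha
    exact ⟨a, i2inj ha⟩
  have hh0s : Function.Surjective h.h0 := h.h0_surjective hs1 hs2
  have hf0s : Function.Surjective f.h0 := f.h0_surjective s1 s2
  have ms0 : Function.Surjective m.h0 := by
    intro y
    obtain ⟨x, hx⟩ := hf0s y
    rw [hfac0] at hx
    exact ⟨h.h0 x, hx⟩
  have hsq := hpo (CIdl L.L1 L.L2) CIdl.inj1 CIdl.inj2 CIdl.isCoprod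
    (CIdl.desc L.e1 L.e2) (CIdl.desc_comp_inj1 _ _) (CIdl.desc_comp_inj2 _ _)
    (CIdl M.L1 M.L2) CIdl.inj1 CIdl.inj2 CIdl.isCoprod
    (CIdl.desc M.e1 M.e2) (CIdl.desc_comp_inj1 _ _) (CIdl.desc_comp_inj2 _ _)
    (CIdl.desc (CIdl.inj1.comp f.h1) (CIdl.inj2.comp f.h2))
    (CIdl.desc_comp_inj1 _ _) (CIdl.desc_comp_inj2 _ _)
  have inv1f : (m.h1.inverse bij1).comp f.h1 = h.h1 := by
    refine FrameHom.ext fun a => ?_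
    rw [hfac1]
    exact m.h1.inverse_apply_apply bij1 (h.h1 a)
  have inv2f : (m.h2.inverse bij2).comp f.h2 = h.h2 := by
    refine FrameHom.ext fun b => ?_
    rw [hfac2]
    exact m.h2.inverse_apply_apply bij2 (h.h2 b)
  have hcompat : (CIdl.desc (N.e1.comp (m.h1.inverse bij1))
        (N.e2.comp (m.h2.inverse bij2))).comp
      (CIdl.desc (CIdl.inj1.comp f.h1) (CIdl.inj2.comp f.h2)) =
      h.h0.comp (CIdl.desc L.e1 L.e2) := by
    have c1 : ((CIdl.desc (N.e1.comp (m.h1.inverse bij1))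
        (N.e2.comp (m.h2.inverse bij2))).comp
        (CIdl.desc (CIdl.inj1.comp f.h1) (CIdl.inj2.comp f.h2))).comp CIdl.inj1 =
        N.e1.comp h.h1 := by
      rw [FrameHom.comp_assoc, CIdl.desc_comp_inj1, ← FrameHom.comp_assoc,
        CIdl.desc_comp_inj1, FrameHom.comp_assoc, inv1f]
    have c2 : ((CIdl.desc (N.e1.comp (m.h1.inverse bij1))
        (N.e2.comp (m.h2.inverse bij2))).comp
        (CIdl.desc (CIdl.inj1.comp f.h1) (CIdl.inj2.comp f.h2))).comp CIdl.inj2 =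
        N.e2.comp h.h2 := by
      rw [FrameHom.comp_assoc, CIdl.desc_comp_inj2, ← FrameHom.comp_assoc,
        CIdl.desc_comp_inj2, FrameHom.comp_assoc, inv2f]
    have c1' : (h.h0.comp (CIdl.desc L.e1 L.e2)).comp CIdl.inj1 = N.e1.comp h.h1 := by
      rw [FrameHom.comp_assoc, CIdl.desc_comp_inj1, h.comm1]
    have c2' : (h.h0.comp (CIdl.desc L.e1 L.e2)).comp CIdl.inj2 = N.e2.comp h.h2 := by
      rw [FrameHom.comp_assoc, CIdl.desc_comp_inj2, h.comm2]
    rw [CIdl.desc_unique _ _ _ c1 c2, CIdl.desc_unique _ _ _ c1' c2']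
  obtain ⟨k, ⟨hk1, hk2⟩, _⟩ := hsq.2 N.L0
    (CIdl.desc (N.e1.comp (m.h1.inverse bij1)) (N.e2.comp (m.h2.inverse bij2))) h.h0 hcompat
  have km : ∀ z : N.L0, k (m.h0 z) = z := by
    intro z
    obtain ⟨x, rfl⟩ := hh0s z
    have hx : k (f.h0 x) = h.h0 x := DFunLike.congr_fun hk2 x
    rw [hfac0] at hx
    exact hx
  have mk : ∀ y : M.L0, m.h0 (k y) = y := by
    intro y
    obtain ⟨z, rfl⟩ := ms0 y
    rw [km z]
  refine ⟨⟨k, m.h1.inverse bij1, m.h2.inverse bij2, ?_, ?_⟩, ?_, ?_⟩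
  · refine FrameHom.ext fun b => ?_
    obtain ⟨n, rfl⟩ := ms1 b
    show k (M.e1 (m.h1 n)) = N.e1 ((m.h1.inverse bij1) (m.h1 n))
    rw [m.h1.inverse_apply_apply bij1 n, ← m.h0_e1, km]
  · refine FrameHom.ext fun b => ?_
    obtain ⟨n, rfl⟩ := ms2 b
    show k (M.e2 (m.h2 n)) = N.e2 ((m.h2.inverse bij2) (m.h2 n))
    rw [m.h2.inverse_apply_apply bij2 n, ← m.h0_e2, km]
  · refine BiframeHom.ext ?_ ?_ ?_
    · exact FrameHom.ext fun z => km z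
    · exact m.h1.inverse_comp bij1
    · exact m.h2.inverse_comp bij2
  · refine BiframeHom.ext ?_ ?_ ?_
    · exact FrameHom.ext fun y => mk y
    · exact m.h1.comp_inverse bij1
    · exact m.h2.comp_inverse bij2

end Main


/-- A biframe homomorphism `f : L → M` is an extremal epimorphism in `BiFrm` if and only if
both component restrictions `f₁` and `f₂` are surjective and the underlying frame
homomorphism `f₀` is the pushout in `Frm` of `f₁ ⊕ f₂` along the canonical quotient map
`q_L : L₁ ⊕ L₂ → L₀`. -/
theorem biframe_extremalEpi_iff {L M : Biframe} (f : BiframeHom L M) :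
    f.IsExtremalEpi ↔
      Function.Surjective f.h1 ∧ Function.Surjective f.h2 ∧ f.IsCanonicalPushout := by
  constructor
  · intro hf
    obtain ⟨s1, s2⟩ := f.surjective_of_extremal hf
    exact ⟨s1, s2, f.isCanonicalPushout_of_extremal hf⟩
  · rintro ⟨s1, s2, hpo⟩
    exact f.extremal_of_surj_pushout s1 s2 hpo
end

section
/- For any biframe L, the assignment ⟨f⟩ ↦ ⟨f̄⟩ sending the equivalence class of a surjective frame homomorphism f : L₀ → S to the class of the induced biframe extremal epimorphism f̄ : L₀ → f(L) (the pushout of f|_{L₁} ⊕ f|_{L₂} along q_L) is a closure operator B_L on the lattice 𝒮(L₀) of sublocale classes of L₀: it is monotone, inflationary (f ≲ f̄), and idempotent. -/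
/-- `fbar : L₀ → S'` is the sublocale quotient of `L₀` induced by the sublocale quotient
`f : L₀ → S` via the biframe structure of `L`: writing `f|_{Lᵢ} = mᵢ ∘ pᵢ` for the
(surjection, injection)-factorizations of the restrictions of `f` to the components, `fbar`
is the pushout in `Frm` of `p₁ ⊕ p₂` along the quotient `q_L : L₁ ⊕ L₂ → L₀`. -/
def Induced (L : Biframe) {S S' : Type} [Order.Frame S] [Order.Frame S']
    (f : FrameHom L.L0 S) (fbar : FrameHom L.L0 S') : Prop :=
  ∃ (F1 : Type) (inst1 : Order.Frame F1) (F2 : Type) (inst2 : Order.Frame F2),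
    letI := inst1
    letI := inst2
    ∃ (p1 : FrameHom L.L1 F1) (m1 : FrameHom F1 S)
      (p2 : FrameHom L.L2 F2) (m2 : FrameHom F2 S),
      Function.Surjective p1 ∧ Function.Injective m1 ∧ m1.comp p1 = f.comp L.e1 ∧
      Function.Surjective p2 ∧ Function.Injective m2 ∧ m2.comp p2 = f.comp L.e2 ∧
      ∀ (K : Type) [Order.Frame K], ∀ (i1 : FrameHom L.L1 K) (i2 : FrameHom L.L2 K),
        IsCoprod i1 i2 →
        ∀ qL : FrameHom K L.L0, qL.comp i1 = L.e1 → qL.comp i2 = L.e2 →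
        ∀ (K' : Type) [Order.Frame K'], ∀ (j1 : FrameHom F1 K') (j2 : FrameHom F2 K'),
          IsCoprod j1 j2 →
          ∀ P : FrameHom K K', P.comp i1 = j1.comp p1 → P.comp i2 = j2.comp p2 →
            ∃ w : FrameHom K' S', IsPushoutSquare P qL fbar w

/-! ### Auxiliary development: coproducts of frames via C-ideals -/

section FrameCoproduct

variable {A B Q : Type} [Order.Frame A] [Order.Frame B] [Order.Frame Q]

/-- A C-ideal in `A × B`: a down-set closed under joins in each coordinate. -/
structure CIdeal (A B : Type) [Order.Frame A] [Order.Frame B] : Type where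
  carrier : Set (A × B)
  down' : ∀ {p q : A × B}, q ≤ p → p ∈ carrier → q ∈ carrier
  clo1' : ∀ (s : Set A) (b : B), (∀ a ∈ s, (a, b) ∈ carrier) → (sSup s, b) ∈ carrier
  clo2' : ∀ (a : A) (s : Set B), (∀ b ∈ s, (a, b) ∈ carrier) → (a, sSup s) ∈ carrier

namespace CIdeal

instance : SetLike (CIdeal A B) (A × B) where
  coe := CIdeal.carrier
  coe_injective := by rintro ⟨c, _, _, _⟩ ⟨c', _, _, _⟩ h; congr

instance : PartialOrder (CIdeal A B) := .ofSetLike (CIdeal A B) (A × B)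

theorem down (D : CIdeal A B) {p q : A × B} (h : q ≤ p) (hp : p ∈ D) : q ∈ D := D.down' h hp

theorem clo1 (D : CIdeal A B) (s : Set A) (b : B) (h : ∀ a ∈ s, (a, b) ∈ D) :
    (sSup s, b) ∈ D := D.clo1' s b h

theorem clo2 (D : CIdeal A B) (a : A) (s : Set B) (h : ∀ b ∈ s, (a, b) ∈ D) :
    (a, sSup s) ∈ D := D.clo2' a s h

theorem bot_fst_mem (D : CIdeal A B) (b : B) : ((⊥ : A), b) ∈ D := by
  have := D.clo1 ∅ b (by simp)
  simpa using this

theorem bot_snd_mem (D : CIdeal A B) (a : A) : (a, (⊥ : B)) ∈ D := by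
  have := D.clo2 a ∅ (by simp)
  simpa using this

instance : InfSet (CIdeal A B) :=
  ⟨fun S =>
    { carrier := {p | ∀ D ∈ S, p ∈ D}
      down' := fun h hp D hD => D.down' h (hp D hD)
      clo1' := fun s b h D hD => D.clo1' s b fun a ha => h a ha D hD
      clo2' := fun a s h D hD => D.clo2' a s fun b hb => h b hb D hD }⟩

instance : CompleteLattice (CIdeal A B) :=
  completeLatticeOfInf _ fun S => by
    constructor
    · intro D hD p hp
      exact hp D hD
    · intro E hE p hp D hD
      exact hE hD hp

/-- The C-ideal with carrier `univ`. -/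
def univCI : CIdeal A B where
  carrier := Set.univ
  down' := by intros; trivial
  clo1' := by intros; trivial
  clo2' := by intros; trivial

theorem mem_top (p : A × B) : p ∈ (⊤ : CIdeal A B) :=
  (le_top (a := (univCI : CIdeal A B))) trivial

/-- Intersection of two C-ideals. -/
def interCI (D E : CIdeal A B) : CIdeal A B where
  carrier := (D : Set (A × B)) ∩ E
  down' := fun h hp => ⟨D.down' h hp.1, E.down' h hp.2⟩
  clo1' := fun s b h => ⟨D.clo1' s b fun a ha => (h a ha).1, E.clo1' s b fun a ha => (h a ha).2⟩
  clo2' := fun a s h => ⟨D.clo2' a s fun b hb => (h b hb).1, E.clo2' a s fun b hb => (h b hb).2⟩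

theorem mem_inf {D E : CIdeal A B} {p : A × B} : p ∈ D ⊓ E ↔ p ∈ D ∧ p ∈ E := by
  constructor
  · intro h
    exact ⟨(inf_le_left : D ⊓ E ≤ D) h, (inf_le_right : D ⊓ E ≤ E) h⟩
  · intro h
    have hle : interCI D E ≤ D ⊓ E :=
      le_inf (fun p hp => hp.1) (fun p hp => hp.2)
    exact hle ⟨h.1, h.2⟩

/-- Auxiliary C-ideal used in the proof of frame distributivity. -/
def distV (D R : CIdeal A B) : CIdeal A B where
  carrier := {q | ∀ r ∈ D, q ⊓ r ∈ R}
  down' := fun h hq r hr => R.down (inf_le_inf h le_rfl) (hq r hr)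
  clo1' := fun s b h r hr => by
    have h2 := R.clo1 ((fun a => a ⊓ r.1) '' s) (b ⊓ r.2) (by
      rintro _ ⟨a, ha, rfl⟩
      have := h a ha r hr
      simpa [Prod.inf_def] using this)
    have key : sSup ((fun a => a ⊓ r.1) '' s) = sSup s ⊓ r.1 := by
      rw [sSup_image]; exact sSup_inf_eq.symm
    rw [key] at h2
    simpa [Prod.inf_def] using h2
  clo2' := fun a s h r hr => by
    have h2 := R.clo2 (a ⊓ r.1) ((fun b => b ⊓ r.2) '' s) (by
      rintro _ ⟨b, hb, rfl⟩
      have := h b hb r hr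
      simpa [Prod.inf_def] using this)
    have key : sSup ((fun b => b ⊓ r.2) '' s) = sSup s ⊓ r.2 := by
      rw [sSup_image]; exact sSup_inf_eq.symm
    rw [key] at h2
    simpa [Prod.inf_def] using h2

instance : Order.Frame (CIdeal A B) :=
  Order.Frame.ofMinimalAxioms
    {
      inf_sSup_le_iSup_inf := fun D S => by
        intro p hp
        obtain ⟨hp1, hp2⟩ := mem_inf.1 hp
        have hV : ∀ E ∈ S, E ≤ distV D (⨆ E ∈ S, D ⊓ E) := by
          intro E hE q hq r hr
          have h1 : q ⊓ r ∈ D ⊓ E :=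
            mem_inf.2 ⟨D.down inf_le_right hr, E.down inf_le_left hq⟩
          exact le_iSup₂ (f := fun (E : CIdeal A B) (_ : E ∈ S) => D ⊓ E) E hE h1
        have hp3 := (sSup_le hV) hp2
        have := hp3 p hp1
        simpa using this }

/-- The C-ideal corresponding to the first coproduct injection. -/
def in1CI (a : A) : CIdeal A B where
  carrier := {p | p.1 ≤ a ∨ p.2 = ⊥}
  down' := by
    rintro p q hqp (h | h)
    · exact Or.inl (le_trans hqp.1 h)
    · exact Or.inr (le_bot_iff.1 (le_trans hqp.2 h.le))
  clo1' := by
    intro s b h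
    by_cases hb : b = ⊥
    · exact Or.inr hb
    · refine Or.inl (sSup_le fun a' ha' => ?_)
      rcases h a' ha' with h' | h'
      · exact h'
      · exact absurd h' hb
  clo2' := by
    intro a' s h
    by_cases ha : a' ≤ a
    · exact Or.inl ha
    · refine Or.inr (le_bot_iff.1 (sSup_le fun b hb => ?_))
      rcases h b hb with h' | h'
      · exact absurd h' ha
      · exact h'.le

/-- The C-ideal corresponding to the second coproduct injection. -/
def in2CI (b : B) : CIdeal A B where
  carrier := {p | p.2 ≤ b ∨ p.1 = ⊥}
  down' := by
    rintro p q hqp (h | h)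
    · exact Or.inl (le_trans hqp.2 h)
    · exact Or.inr (le_bot_iff.1 (le_trans hqp.1 h.le))
  clo1' := by
    intro s b' h
    by_cases hb : b' ≤ b
    · exact Or.inl hb
    · refine Or.inr (le_bot_iff.1 (sSup_le fun a ha => ?_))
      rcases h a ha with h' | h'
      · exact absurd h' hb
      · exact h'.le
  clo2' := by
    intro a s h
    by_cases ha : a = ⊥
    · exact Or.inr ha
    · refine Or.inl (sSup_le fun b' hb' => ?_)
      rcases h b' hb' with h' | h'
      · exact h'
      · exact absurd h' ha

theorem mem_in1CI {a : A} {p : A × B} : p ∈ in1CI (B := B) a ↔ p.1 ≤ a ∨ p.2 = ⊥ := Iff.rfl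

theorem mem_in2CI {b : B} {p : A × B} : p ∈ in2CI (A := A) b ↔ p.2 ≤ b ∨ p.1 = ⊥ := Iff.rfl

/-- The first coproduct injection as a frame homomorphism. -/
def in1 : FrameHom A (CIdeal A B) :=
  ⟨⟨⟨in1CI, by
    intro a a'
    refine SetLike.ext fun p => ?_
    simp only [mem_in1CI, mem_inf, le_inf_iff]
    tauto⟩, by
    refine SetLike.ext fun p => ?_
    simp only [mem_in1CI, le_top, true_or]
    exact ⟨fun _ => mem_top p, fun _ => trivial⟩⟩, by
    intro s
    refine le_antisymm ?_ (sSup_le ?_)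
    · rintro p (hp | hp)
      · obtain ⟨x, y⟩ := p
        simp only at hp
        have key : ∀ a ∈ s, ((x ⊓ a, y) : A × B) ∈ sSup (in1CI '' s) := by
          intro a ha
          have h1 : ((x ⊓ a, y) : A × B) ∈ in1CI (B := B) a := Or.inl inf_le_right
          exact (le_sSup (Set.mem_image_of_mem in1CI ha) : in1CI a ≤ sSup (in1CI '' s)) h1
        have h2 := (sSup (in1CI '' s)).clo1 ((fun a => x ⊓ a) '' s) y (by
          rintro _ ⟨a, ha, rfl⟩
          exact key a ha)
        have h3 : sSup ((fun a => x ⊓ a) '' s) = x := by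
          rw [sSup_image, ← inf_sSup_eq]
          exact inf_eq_left.2 hp
        rwa [h3] at h2
      · obtain ⟨x, y⟩ := p
        simp only at hp
        subst hp
        exact bot_snd_mem _ x
    · rintro _ ⟨a, ha, rfl⟩
      rintro p (hp | hp)
      · exact Or.inl (le_trans hp (le_sSup ha))
      · exact Or.inr hp⟩

/-- The second coproduct injection as a frame homomorphism. -/
def in2 : FrameHom B (CIdeal A B) :=
  ⟨⟨⟨in2CI, by
    intro b b'
    refine SetLike.ext fun p => ?_
    simp only [mem_in2CI, mem_inf, le_inf_iff]
    tauto⟩, by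
    refine SetLike.ext fun p => ?_
    simp only [mem_in2CI, le_top, true_or]
    exact ⟨fun _ => mem_top p, fun _ => trivial⟩⟩, by
    intro s
    refine le_antisymm ?_ (sSup_le ?_)
    · rintro p (hp | hp)
      · obtain ⟨x, y⟩ := p
        simp only at hp
        have key : ∀ b ∈ s, ((x, y ⊓ b) : A × B) ∈ sSup (in2CI '' s) := by
          intro b hb
          have h1 : ((x, y ⊓ b) : A × B) ∈ in2CI (A := A) b := Or.inl inf_le_right
          exact (le_sSup (Set.mem_image_of_mem in2CI hb) : in2CI b ≤ sSup (in2CI '' s)) h1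
        have h2 := (sSup (in2CI '' s)).clo2 x ((fun b => y ⊓ b) '' s) (by
          rintro _ ⟨b, hb, rfl⟩
          exact key b hb)
        have h3 : sSup ((fun b => y ⊓ b) '' s) = y := by
          rw [sSup_image, ← inf_sSup_eq]
          exact inf_eq_left.2 hp
        rwa [h3] at h2
      · obtain ⟨x, y⟩ := p
        simp only at hp
        subst hp
        exact bot_fst_mem _ y
    · rintro _ ⟨b, hb, rfl⟩
      rintro p (hp | hp)
      · exact Or.inl (le_trans hp (le_sSup hb))
      · exact Or.inr hp⟩

theorem in1_apply (a : A) : (in1 a : CIdeal A B) = in1CI a := rfl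
theorem in2_apply (b : B) : (in2 b : CIdeal A B) = in2CI b := rfl

/-- The underlying function of the co-pairing of `h1` and `h2`. -/
def descCarrier (h1 : FrameHom A Q) (h2 : FrameHom B Q) (D : CIdeal A B) : Q :=
  sSup ((fun p : A × B => h1 p.1 ⊓ h2 p.2) '' (D : Set (A × B)))

/-- Auxiliary C-ideal: pairs whose mixed meet is below `c`. -/
def descV (h1 : FrameHom A Q) (h2 : FrameHom B Q) (c : Q) : CIdeal A B where
  carrier := {p | h1 p.1 ⊓ h2 p.2 ≤ c}
  down' := fun h hp =>
    le_trans (inf_le_inf (OrderHomClass.mono h1 h.1) (OrderHomClass.mono h2 h.2)) hp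
  clo1' := fun s b h => by
    show h1 (sSup s) ⊓ h2 b ≤ c
    rw [map_sSup, sSup_inf_eq]
    exact iSup₂_le fun x hx => by obtain ⟨a, ha, rfl⟩ := hx; exact h a ha
  clo2' := fun a s h => by
    show h1 a ⊓ h2 (sSup s) ≤ c
    rw [map_sSup, inf_sSup_eq]
    exact iSup₂_le fun x hx => by obtain ⟨b, hb, rfl⟩ := hx; exact h b hb

theorem le_descCarrier {h1 : FrameHom A Q} {h2 : FrameHom B Q} {D : CIdeal A B} {p : A × B}
    (hp : p ∈ D) : h1 p.1 ⊓ h2 p.2 ≤ descCarrier h1 h2 D :=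
  le_sSup (Set.mem_image_of_mem _ hp)

theorem descCarrier_le_iff {h1 : FrameHom A Q} {h2 : FrameHom B Q} {D : CIdeal A B} {c : Q} :
    descCarrier h1 h2 D ≤ c ↔ D ≤ descV h1 h2 c := by
  constructor
  · intro h p hp
    exact le_trans (le_descCarrier hp) h
  · intro h
    refine sSup_le ?_
    rintro _ ⟨p, hp, rfl⟩
    exact h hp

theorem descCarrier_mono {h1 : FrameHom A Q} {h2 : FrameHom B Q} {D E : CIdeal A B}
    (h : D ≤ E) : descCarrier h1 h2 D ≤ descCarrier h1 h2 E := by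
  refine sSup_le ?_
  rintro _ ⟨p, hp, rfl⟩
  exact le_descCarrier (h hp)

/-- The co-pairing of `h1` and `h2` as a frame homomorphism. -/
def desc (h1 : FrameHom A Q) (h2 : FrameHom B Q) : FrameHom (CIdeal A B) Q :=
  ⟨⟨⟨descCarrier h1 h2, by
    intro D E
    refine le_antisymm
      (le_inf (descCarrier_mono inf_le_left) (descCarrier_mono inf_le_right)) ?_
    rw [descCarrier, descCarrier, sSup_inf_sSup]
    refine iSup₂_le ?_
    rintro ⟨x, y⟩ ⟨⟨p, hp, rfl⟩, q, hq, rfl⟩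
    have hpq : p ⊓ q ∈ D ⊓ E :=
      mem_inf.2 ⟨D.down inf_le_left hp, E.down inf_le_right hq⟩
    have h := le_descCarrier (h1 := h1) (h2 := h2) hpq
    refine le_trans ?_ h
    simp only [Prod.inf_def, map_inf]
    exact (inf_inf_inf_comm _ _ _ _).le⟩, by
    refine le_antisymm le_top ?_
    have hm : ((⊤, ⊤) : A × B) ∈ (⊤ : CIdeal A B) := mem_top _
    have h := le_descCarrier (h1 := h1) (h2 := h2) hm
    simpa using h⟩, by
    intro S
    refine le_antisymm
      (descCarrier_le_iff.2 (sSup_le fun D hD =>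
        descCarrier_le_iff.1 (le_sSup (Set.mem_image_of_mem _ hD)))) ?_
    refine sSup_le ?_
    rintro _ ⟨D, hD, rfl⟩
    exact descCarrier_mono (le_sSup hD)⟩

theorem desc_apply (h1 : FrameHom A Q) (h2 : FrameHom B Q) (D : CIdeal A B) :
    desc h1 h2 D = descCarrier h1 h2 D := rfl

theorem descCarrier_in1 (h1 : FrameHom A Q) (h2 : FrameHom B Q) (a : A) :
    descCarrier h1 h2 (in1CI (B := B) a) = h1 a := by
  refine le_antisymm (sSup_le ?_) ?_
  · rintro _ ⟨p, hp, rfl⟩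
    rcases hp with h | h
    · exact le_trans inf_le_left (OrderHomClass.mono h1 h)
    · simp only []
      rw [h]
      simp
  · have hm : ((a, ⊤) : A × B) ∈ in1CI (B := B) a := Or.inl le_rfl
    have h := le_descCarrier (h1 := h1) (h2 := h2) hm
    simpa using h

theorem descCarrier_in2 (h1 : FrameHom A Q) (h2 : FrameHom B Q) (b : B) :
    descCarrier h1 h2 (in2CI (A := A) b) = h2 b := by
  refine le_antisymm (sSup_le ?_) ?_
  · rintro _ ⟨p, hp, rfl⟩
    rcases hp with h | h
    · exact le_trans inf_le_right (OrderHomClass.mono h2 h)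
    · simp only []
      rw [h]
      simp
  · have hm : ((⊤, b) : A × B) ∈ in2CI (A := A) b := Or.inl le_rfl
    have h := le_descCarrier (h1 := h1) (h2 := h2) hm
    simpa using h

theorem eq_iSup (D : CIdeal A B) :
    D = ⨆ p ∈ (D : Set (A × B)), in1CI p.1 ⊓ in2CI p.2 := by
  refine le_antisymm ?_ ?_
  · intro p hp
    have hmem : p ∈ in1CI (B := B) p.1 ⊓ in2CI p.2 :=
      mem_inf.2 ⟨Or.inl le_rfl, Or.inl le_rfl⟩
    exact (le_iSup₂ (f := fun (p : A × B) (_ : p ∈ (D : Set (A × B))) =>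
      in1CI p.1 ⊓ in2CI p.2) p hp) hmem
  · refine iSup₂_le fun q hq => ?_
    intro r hr
    obtain ⟨h1, h2⟩ := mem_inf.1 hr
    obtain ⟨r1, r2⟩ := r
    rcases h1 with h1 | h1 <;> rcases h2 with h2 | h2
    · exact D.down ⟨h1, h2⟩ hq
    · simp only at h2
      subst h2
      exact bot_fst_mem D r2
    · simp only at h1
      subst h1
      exact bot_snd_mem D r1
    · simp only at h1
      subst h1
      exact bot_snd_mem D r1

/-- `CIdeal A B` with `in1`, `in2` is a coproduct of `A` and `B` in `Frm`. -/
theorem isCoprod : IsCoprod (in1 : FrameHom A (CIdeal A B)) (in2 : FrameHom B (CIdeal A B)) := by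
  intro Q _ h1 h2
  refine ⟨desc h1 h2, ⟨FrameHom.ext fun a => descCarrier_in1 h1 h2 a,
    FrameHom.ext fun b => descCarrier_in2 h1 h2 b⟩, ?_⟩
  rintro k ⟨hk1, hk2⟩
  refine FrameHom.ext fun D => ?_
  have hk1' : ∀ a : A, k (in1CI a) = h1 a := fun a => DFunLike.congr_fun hk1 a
  have hk2' : ∀ b : B, k (in2CI b) = h2 b := fun b => DFunLike.congr_fun hk2 b
  calc k D = k (⨆ p ∈ (D : Set (A × B)), in1CI p.1 ⊓ in2CI p.2) := by rw [← eq_iSup]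
    _ = ⨆ p ∈ (D : Set (A × B)), k (in1CI p.1 ⊓ in2CI p.2) := by
        rw [map_iSup]
        exact iSup_congr fun p => map_iSup k _
    _ = ⨆ p ∈ (D : Set (A × B)), h1 p.1 ⊓ h2 p.2 := by
        refine iSup_congr fun p => iSup_congr fun hp => ?_
        rw [map_inf, hk1', hk2']
    _ = desc h1 h2 D := by
        rw [desc_apply, descCarrier, sSup_image]

end CIdeal

end FrameCoproduct

section Lift

variable {A B C : Type} [Order.Frame A] [Order.Frame B] [Order.Frame C]

theorem psup_eq (p : FrameHom A B) (hs : Function.Surjective p) (b : B) :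
    p (sSup {x | p x ≤ b}) = b := by
  refine le_antisymm ?_ ?_
  · rw [map_sSup]
    refine sSup_le ?_
    rintro _ ⟨x, hx, rfl⟩
    exact hx
  · obtain ⟨x, rfl⟩ := hs b
    exact OrderHomClass.mono p (le_sSup (show p x ≤ p x from le_rfl))

/-- Lifting a frame homomorphism along a surjective frame homomorphism with smaller kernel. -/
def liftAlong (p : FrameHom A B) (q : FrameHom A C) (hs : Function.Surjective p)
    (hk : ∀ x y, p x = p y → q x = q y) : FrameHom B C :=
  ⟨⟨⟨fun b => q (sSup {x | p x ≤ b}), by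
    intro b b'
    have h1 : p (sSup {x | p x ≤ b ⊓ b'}) = p (sSup {x | p x ≤ b} ⊓ sSup {x | p x ≤ b'}) := by
      rw [map_inf, psup_eq p hs, psup_eq p hs, psup_eq p hs]
    show q (sSup {x | p x ≤ b ⊓ b'}) = q (sSup {x | p x ≤ b}) ⊓ q (sSup {x | p x ≤ b'})
    rw [hk _ _ h1, map_inf]⟩, by
    have h1 : p (sSup {x | p x ≤ ⊤}) = p ⊤ := by rw [psup_eq p hs, map_top]
    show q (sSup {x | p x ≤ ⊤}) = ⊤
    rw [hk _ _ h1, map_top]⟩, by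
    intro s
    show q (sSup {x | p x ≤ sSup s}) = sSup ((fun b => q (sSup {x | p x ≤ b})) '' s)
    have h1 : p (sSup {x | p x ≤ sSup s}) = p (⨆ b ∈ s, sSup {x | p x ≤ b}) := by
      rw [psup_eq p hs, map_iSup₂]
      simp only [psup_eq p hs]
      exact sSup_eq_iSup
    rw [hk _ _ h1, map_iSup₂, sSup_image]⟩

theorem liftAlong_comp (p : FrameHom A B) (q : FrameHom A C) (hs : Function.Surjective p)
    (hk : ∀ x y, p x = p y → q x = q y) : (liftAlong p q hs hk).comp p = q :=
  FrameHom.ext fun a => hk _ _ (psup_eq p hs (p a))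

end Lift

theorem coprod_ext {L1 L2 K Q : Type} [Order.Frame L1] [Order.Frame L2] [Order.Frame K]
    [Order.Frame Q] {i1 : FrameHom L1 K} {i2 : FrameHom L2 K} (hc : IsCoprod i1 i2)
    {k k' : FrameHom K Q} (h1 : k.comp i1 = k'.comp i1) (h2 : k.comp i2 = k'.comp i2) :
    k = k' := by
  obtain ⟨m, -, hu⟩ := hc Q (k'.comp i1) (k'.comp i2)
  rw [hu k ⟨h1, h2⟩, hu k' ⟨rfl, rfl⟩]

/-- The kernel of `f̄` on the components contains that of `f`. -/
theorem induced_kernel {L : Biframe} {S S' : Type} [Order.Frame S] [Order.Frame S']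
    {f : FrameHom L.L0 S} {fbar : FrameHom L.L0 S'} (h : Induced L f fbar) :
    (∀ x y : L.L1, f (L.e1 x) = f (L.e1 y) → fbar (L.e1 x) = fbar (L.e1 y)) ∧
    (∀ x y : L.L2, f (L.e2 x) = f (L.e2 y) → fbar (L.e2 x) = fbar (L.e2 y)) := by
  obtain ⟨F1, inst1, F2, inst2, p1, m1, p2, m2, hp1, hm1, hc1, hp2, hm2, hc2, hmain⟩ := h
  obtain ⟨qL, ⟨hq1, hq2⟩, -⟩ := CIdeal.isCoprod (A := L.L1) (B := L.L2) L.L0 L.e1 L.e2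
  obtain ⟨P, ⟨hP1, hP2⟩, -⟩ := CIdeal.isCoprod (A := L.L1) (B := L.L2) (CIdeal F1 F2)
    (FrameHom.comp CIdeal.in1 p1) (FrameHom.comp CIdeal.in2 p2)
  obtain ⟨w, hw⟩ := hmain (CIdeal L.L1 L.L2) CIdeal.in1 CIdeal.in2 CIdeal.isCoprod qL hq1 hq2
    (CIdeal F1 F2) CIdeal.in1 CIdeal.in2 CIdeal.isCoprod P hP1 hP2
  have he1 : ∀ z : L.L1, fbar (L.e1 z) = w (CIdeal.in1 (p1 z)) := by
    intro z
    have h1 : w (P (CIdeal.in1 z)) = fbar (qL (CIdeal.in1 z)) := DFunLike.congr_fun hw.1 _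
    have h2 : qL (CIdeal.in1 z) = L.e1 z := DFunLike.congr_fun hq1 z
    have h3 : P (CIdeal.in1 z) = CIdeal.in1 (p1 z) := DFunLike.congr_fun hP1 z
    rw [← h2, ← h1, h3]
  have he2 : ∀ z : L.L2, fbar (L.e2 z) = w (CIdeal.in2 (p2 z)) := by
    intro z
    have h1 : w (P (CIdeal.in2 z)) = fbar (qL (CIdeal.in2 z)) := DFunLike.congr_fun hw.1 _
    have h2 : qL (CIdeal.in2 z) = L.e2 z := DFunLike.congr_fun hq2 z
    have h3 : P (CIdeal.in2 z) = CIdeal.in2 (p2 z) := DFunLike.congr_fun hP2 z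
    rw [← h2, ← h1, h3]
  constructor
  · intro x y hxy
    have hcx : m1 (p1 x) = f (L.e1 x) := DFunLike.congr_fun hc1 x
    have hcy : m1 (p1 y) = f (L.e1 y) := DFunLike.congr_fun hc1 y
    have hpxy : p1 x = p1 y := hm1 (hcx.trans (hxy.trans hcy.symm))
    rw [he1 x, he1 y, hpxy]
  · intro x y hxy
    have hcx : m2 (p2 x) = f (L.e2 x) := DFunLike.congr_fun hc2 x
    have hcy : m2 (p2 y) = f (L.e2 y) := DFunLike.congr_fun hc2 y
    have hpxy : p2 x = p2 y := hm2 (hcx.trans (hxy.trans hcy.symm))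
    rw [he2 x, he2 y, hpxy]

/-- Universal property of the induced quotient `ḡ`: any frame homomorphism out of `L₀`
whose kernel on the components contains that of `g` factors through `ḡ`. -/
theorem induced_univ {L : Biframe} {T T' Q : Type} [Order.Frame T] [Order.Frame T']
    [Order.Frame Q] {g : FrameHom L.L0 T} {gbar : FrameHom L.L0 T'} (hg : Induced L g gbar)
    (v : FrameHom L.L0 Q)
    (h1 : ∀ x y : L.L1, g (L.e1 x) = g (L.e1 y) → v (L.e1 x) = v (L.e1 y))
    (h2 : ∀ x y : L.L2, g (L.e2 x) = g (L.e2 y) → v (L.e2 x) = v (L.e2 y)) :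
    ∃ k : FrameHom T' Q, k.comp gbar = v := by
  obtain ⟨G1, inst1, G2, inst2, p1, m1, p2, m2, hp1, hm1, hc1, hp2, hm2, hc2, hmain⟩ := hg
  obtain ⟨qL, ⟨hq1, hq2⟩, -⟩ := CIdeal.isCoprod (A := L.L1) (B := L.L2) L.L0 L.e1 L.e2
  obtain ⟨P, ⟨hP1, hP2⟩, -⟩ := CIdeal.isCoprod (A := L.L1) (B := L.L2) (CIdeal G1 G2)
    (FrameHom.comp CIdeal.in1 p1) (FrameHom.comp CIdeal.in2 p2)
  obtain ⟨w, hw⟩ := hmain (CIdeal L.L1 L.L2) CIdeal.in1 CIdeal.in2 CIdeal.isCoprod qL hq1 hq2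
    (CIdeal G1 G2) CIdeal.in1 CIdeal.in2 CIdeal.isCoprod P hP1 hP2
  have hker1 : ∀ x y, p1 x = p1 y → (v.comp L.e1) x = (v.comp L.e1) y := by
    intro x y hxy
    have hcx : m1 (p1 x) = g (L.e1 x) := DFunLike.congr_fun hc1 x
    have hcy : m1 (p1 y) = g (L.e1 y) := DFunLike.congr_fun hc1 y
    exact h1 x y (hcx.symm.trans (by rw [hxy]; exact hcy))
  have hker2 : ∀ x y, p2 x = p2 y → (v.comp L.e2) x = (v.comp L.e2) y := by
    intro x y hxy
    have hcx : m2 (p2 x) = g (L.e2 x) := DFunLike.congr_fun hc2 x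
    have hcy : m2 (p2 y) = g (L.e2 y) := DFunLike.congr_fun hc2 y
    exact h2 x y (hcx.symm.trans (by rw [hxy]; exact hcy))
  obtain ⟨u, ⟨hu1, hu2⟩, -⟩ := CIdeal.isCoprod (A := G1) (B := G2) Q
    (liftAlong p1 (v.comp L.e1) hp1 hker1) (liftAlong p2 (v.comp L.e2) hp2 hker2)
  have hcomm : u.comp P = v.comp qL := by
    refine coprod_ext (CIdeal.isCoprod (A := L.L1) (B := L.L2)) ?_ ?_
    · rw [FrameHom.comp_assoc, FrameHom.comp_assoc, hP1, hq1, ← FrameHom.comp_assoc, hu1,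
        liftAlong_comp]
    · rw [FrameHom.comp_assoc, FrameHom.comp_assoc, hP2, hq2, ← FrameHom.comp_assoc, hu2,
        liftAlong_comp]
  obtain ⟨k, ⟨-, hk⟩, -⟩ := hw.2 Q u v hcomm
  exact ⟨k, hk⟩



/-- For a biframe `L`, the assignment `⟨f⟩ ↦ ⟨f̄⟩`, sending (the class of) a surjective
frame homomorphism `f : L₀ → S` to (the class of) the induced quotient
`f̄ : L₀ → f(L)`, is a closure operator `B_L` on the preordered collection `𝒮(L₀)` of
sublocale quotients of `L₀` (where `f ≲ g` iff `f` factors through `g`): it is monotone,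
inflationary and idempotent. -/
theorem induced_closure_operator (L : Biframe)
    {S S' T T' S'' : Type} [Order.Frame S] [Order.Frame S'] [Order.Frame T]
    [Order.Frame T'] [Order.Frame S'']
    (f : FrameHom L.L0 S) (hf : Function.Surjective f)
    (fbar : FrameHom L.L0 S') (hfbar : Induced L f fbar)
    (g : FrameHom L.L0 T) (hg : Function.Surjective g)
    (gbar : FrameHom L.L0 T') (hgbar : Induced L g gbar)
    (fbarbar : FrameHom L.L0 S'') (hfbarbar : Induced L fbar fbarbar) :
    -- monotone
    ((∃ h : FrameHom T S, h.comp g = f) → ∃ h : FrameHom T' S', h.comp gbar = fbar) ∧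
    -- inflationary : `f ≲ f̄`
    (∃ h : FrameHom S' S, h.comp fbar = f) ∧
    -- idempotent : `f̄̄ ≃ f̄`
    ((∃ h : FrameHom S'' S', h.comp fbarbar = fbar) ∧
      (∃ h : FrameHom S' S'', h.comp fbar = fbarbar)) := by
  refine ⟨?_, ?_, ?_, ?_⟩
  · rintro ⟨h, hh⟩
    refine induced_univ hgbar fbar ?_ ?_
    · intro x y hxy
      refine (induced_kernel hfbar).1 x y ?_
      have hx : h (g (L.e1 x)) = f (L.e1 x) := DFunLike.congr_fun hh (L.e1 x)
      have hy : h (g (L.e1 y)) = f (L.e1 y) := DFunLike.congr_fun hh (L.e1 y)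
      rw [← hx, ← hy, hxy]
    · intro x y hxy
      refine (induced_kernel hfbar).2 x y ?_
      have hx : h (g (L.e2 x)) = f (L.e2 x) := DFunLike.congr_fun hh (L.e2 x)
      have hy : h (g (L.e2 y)) = f (L.e2 y) := DFunLike.congr_fun hh (L.e2 y)
      rw [← hx, ← hy, hxy]
  · exact induced_univ hfbar f (fun _ _ h => h) (fun _ _ h => h)
  · exact induced_univ hfbarbar fbar (fun _ _ h => h) (fun _ _ h => h)
  · refine induced_univ hfbar fbarbar ?_ ?_
    · intro x y hxy
      exact (induced_kernel hfbarbar).1 x y ((induced_kernel hfbar).1 x y hxy)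
    · intro x y hxy
      exact (induced_kernel hfbarbar).2 x y ((induced_kernel hfbar).2 x y hxy)
end
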